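/- arXiv:2209.10202 — 7 statements merged into one kernel-verified Lean document; each statement's English description precedes it below -/
import Mathlib

section
/- Let H be a real Hilbert space, Q ⊆ H a nonempty closed convex set, ν > 0, A : Q → H a ν-inverse strongly monotone operator, S : Q → Q a nonexpansive mapping, f : Q → Q a contraction with coefficient ρ ∈ [0,1), and let 0 < a < b < 2ν and λ : (0,1] → [a,b]. Assume Ω = Fix(S) ∩ S_VI(A,Q) is nonempty, and for each t ∈ (0,1] let x_t ∈ Q be the unique point satisfying x_t = t·f(x_t) + (1 − t)·S(P_Q(x_t − λ(t)·A x_t)). Then x_t converges strongly in H, as t → 0⁺, to q*, the unique solution of the variational problem: q* ∈ Ω and ⟨f(q*) − q*, x − q*⟩ ≤ 0 for all x ∈ Ω. -/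
open scoped RealInnerProductSpace
open Filter Set

lemma aux_ulim {α : Type*} (U : Ultrafilter α) {g : α → ℝ} {s : Set ℝ}
    (hs : IsCompact s) (h : ∀ᶠ n in (U : Filter α), g n ∈ s) :
    ∃ r ∈ s, Filter.Tendsto g (U : Filter α) (nhds r) := by
  obtain ⟨r, hr, hle⟩ := hs.ultrafilter_le_nhds (U.map g)
    (by rw [Ultrafilter.coe_map]; exact Filter.le_principal_iff.mpr h)
  exact ⟨r, hr, hle⟩

lemma aux_weak {H : Type*} [NormedAddCommGroup H] [InnerProductSpace ℝ H] [CompleteSpace H]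
    {α : Type*} (U : Ultrafilter α) (y : α → H) (c : ℝ)
    (hb : ∀ᶠ n in (U : Filter α), ‖y n‖ ≤ c) :
    ∃ z : H, ∀ w : H, Filter.Tendsto (fun n => ⟪y n, w⟫) (U : Filter α) (nhds ⟪z, w⟫) := by
  have hlim : ∀ w : H, ∃ r, Filter.Tendsto (fun n => ⟪y n, w⟫) (U : Filter α) (nhds r) ∧
      |r| ≤ c * ‖w‖ := by
    intro w
    obtain ⟨r, hr, ht⟩ := aux_ulim U (isCompact_Icc (a := -(c * ‖w‖)) (b := c * ‖w‖))
      (hb.mono fun n hn => by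
        have h1 : |⟪y n, w⟫| ≤ ‖y n‖ * ‖w‖ := abs_real_inner_le_norm _ _
        have h2 : ‖y n‖ * ‖w‖ ≤ c * ‖w‖ :=
          mul_le_mul_of_nonneg_right hn (norm_nonneg _)
        cases' abs_le.mp (le_trans h1 h2) with h3 h4
        exact ⟨h3, h4⟩)
    exact ⟨r, ht, abs_le.mpr ⟨hr.1, hr.2⟩⟩
  choose F hF hFb using hlim
  have hadd : ∀ w1 w2, F (w1 + w2) = F w1 + F w2 := by
    intro w1 w2
    refine tendsto_nhds_unique (hF _) ?_
    have := (hF w1).add (hF w2)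
    simpa [inner_add_right] using this
  have hsmul : ∀ (r : ℝ) w, F (r • w) = r * F w := by
    intro r w
    refine tendsto_nhds_unique (hF _) ?_
    have := (hF w).const_mul r
    simpa [real_inner_smul_right, mul_comm] using this
  let Flin : H →ₗ[ℝ] ℝ :=
    { toFun := F, map_add' := hadd, map_smul' := hsmul }
  let Fc := Flin.mkContinuous c (fun w => by
    simpa [Real.norm_eq_abs, Flin] using hFb w)
  refine ⟨(InnerProductSpace.toDual ℝ H).symm Fc, fun w => ?_⟩
  have hz : ⟪(InnerProductSpace.toDual ℝ H).symm Fc, w⟫ = Fc w := by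
    rw [← InnerProductSpace.toDual_apply_apply]
    simp
  rw [hz]
  exact hF w

set_option maxHeartbeats 2000000 in
/-- The implicit path `x_t`, defined by
`x_t = t f(x_t) + (1-t) S(P_Q(x_t - λ(t) A x_t))`, converges strongly as `t → 0⁺`
to `q*`, the unique solution of the variational problem (VP) on `Ω = Fix(S) ∩ S_VI(A,Q)`. -/
theorem stmt_8 {H : Type*} [NormedAddCommGroup H] [InnerProductSpace ℝ H] [CompleteSpace H]
    (Q : Set H) (hQne : Q.Nonempty) (hQclosed : IsClosed Q) (hQconvex : Convex ℝ Q)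
    (ν : ℝ) (hν : 0 < ν)
    (A : H → H) (hA : ∀ x ∈ Q, ∀ y ∈ Q, ν * ‖A x - A y‖ ^ 2 ≤ ⟪A x - A y, x - y⟫)
    (P : H → H) (hPmem : ∀ x, P x ∈ Q)
    (hP : ∀ (x : H), ∀ y ∈ Q, ⟪x - P x, y - P x⟫ ≤ 0)
    (S : H → H) (hSmem : ∀ x ∈ Q, S x ∈ Q)
    (hS : ∀ x ∈ Q, ∀ y ∈ Q, ‖S x - S y‖ ≤ ‖x - y‖)
    (ρ : ℝ) (hρ : ρ ∈ Set.Ico (0 : ℝ) 1)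
    (f : H → H) (hfmem : ∀ x ∈ Q, f x ∈ Q)
    (hf : ∀ x ∈ Q, ∀ y ∈ Q, ‖f x - f y‖ ≤ ρ * ‖x - y‖)
    (a b : ℝ) (hab : 0 < a ∧ a < b ∧ b < 2 * ν)
    (lam : ℝ → ℝ) (hlam : ∀ t ∈ Set.Ioc (0 : ℝ) 1, lam t ∈ Set.Icc a b)
    (Ω : Set H)
    (hΩ : Ω = {x : H | x ∈ Q ∧ S x = x} ∩ {q : H | q ∈ Q ∧ ∀ x ∈ Q, 0 ≤ ⟪A q, x - q⟫})
    (hΩne : Ω.Nonempty)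
    (x : ℝ → H) (hxQ : ∀ t ∈ Set.Ioc (0 : ℝ) 1, x t ∈ Q)
    (hx : ∀ t ∈ Set.Ioc (0 : ℝ) 1,
      x t = t • f (x t) + (1 - t) • S (P (x t - lam t • A (x t)))) :
    ∃ qstar : H,
      (qstar ∈ Ω ∧ ∀ y ∈ Ω, ⟪f qstar - qstar, y - qstar⟫ ≤ 0) ∧
      (∀ q : H, (q ∈ Ω ∧ ∀ y ∈ Ω, ⟪f q - q, y - q⟫ ≤ 0) → q = qstar) ∧
      Filter.Tendsto x (nhdsWithin 0 (Set.Ioi (0 : ℝ))) (nhds qstar) := by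
  obtain ⟨ha, hba, hb2⟩ := hab
  have hρ0 : 0 ≤ ρ := hρ.1
  have hρ1 : ρ < 1 := hρ.2
  obtain ⟨q0, hq0⟩ := hΩne
  have hΩmem : ∀ q : H, q ∈ Ω ↔ (q ∈ Q ∧ S q = q) ∧ (q ∈ Q ∧ ∀ y ∈ Q, 0 ≤ ⟪A q, y - q⟫) := by
    intro q; rw [hΩ]; exact Iff.rfl
  obtain ⟨⟨hq0Q, hSq0⟩, -, hVI0⟩ := (hΩmem q0).mp hq0
  -- A is Lipschitz
  have hAL : ∀ u ∈ Q, ∀ v ∈ Q, ν * ‖A u - A v‖ ≤ ‖u - v‖ := by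
    intro u hu v hv
    rcases eq_or_lt_of_le (norm_nonneg (A u - A v)) with h0 | h0
    · rw [← h0]; simpa using norm_nonneg (u - v)
    · have h1 := hA u hu v hv
      have h2 := real_inner_le_norm (A u - A v) (u - v)
      nlinarith
  -- P is firmly nonexpansive
  have hPfirm : ∀ u v : H, ‖P u - P v‖ ^ 2 ≤ ⟪u - v, P u - P v⟫ := by
    intro u v
    have h1 := hP u (P v) (hPmem v)
    have h2 := hP v (P u) (hPmem u)
    have e : ⟪u - P u, P v - P u⟫ + ⟪v - P v, P u - P v⟫
        = -⟪u - v, P u - P v⟫ + ‖P u - P v‖ ^ 2 := by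
      simp only [inner_sub_left, inner_sub_right, ← real_inner_self_eq_norm_sq]; ring
    linarith
  have hPnon : ∀ u v : H, ‖P u - P v‖ ≤ ‖u - v‖ := by
    intro u v
    have h1 := hPfirm u v
    have h2 := real_inner_le_norm (u - v) (P u - P v)
    nlinarith [norm_nonneg (P u - P v), norm_nonneg (u - v)]
  -- uniqueness of the projection characterization
  have hPuniq : ∀ w p, p ∈ Q → (∀ y ∈ Q, ⟪w - p, y - p⟫ ≤ 0) → P w = p := by
    intro w p hp hchar
    have h1 := hP w p hp
    have h2 := hchar (P w) (hPmem w)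
    have e : ⟪w - P w, p - P w⟫ + ⟪w - p, P w - p⟫ = ‖p - P w‖ ^ 2 := by
      simp only [inner_sub_left, inner_sub_right, ← real_inner_self_eq_norm_sq]; ring
    have h3 : ‖p - P w‖ ^ 2 ≤ 0 := by linarith
    have h4 : ‖p - P w‖ = 0 := by nlinarith [norm_nonneg (p - P w)]
    have h5 : p - P w = 0 := by simpa using h4
    exact (sub_eq_zero.mp h5).symm
  -- I - l A is nonexpansive on Q, quantitatively
  have hIsq : ∀ l : ℝ, 0 ≤ l → l ≤ 2 * ν → ∀ u ∈ Q, ∀ v ∈ Q,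
      ‖(u - l • A u) - (v - l • A v)‖ ^ 2
        ≤ ‖u - v‖ ^ 2 - l * (2 * ν - l) * ‖A u - A v‖ ^ 2 := by
    intro l hl0 hl2 u hu v hv
    have hident : (u - l • A u) - (v - l • A v) = (u - v) - l • (A u - A v) := by
      rw [smul_sub]; abel
    rw [hident, norm_sub_sq_real, real_inner_smul_right, norm_smul, Real.norm_eq_abs,
      mul_pow, sq_abs]
    have hAuv := hA u hu v hv
    have hcomm : ⟪u - v, A u - A v⟫ = ⟪A u - A v, u - v⟫ := real_inner_comm _ _
    nlinarith [mul_nonneg hl0 (sub_nonneg.mpr hAuv)]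
  have hInon : ∀ l : ℝ, a ≤ l → l ≤ b → ∀ u ∈ Q, ∀ v ∈ Q,
      ‖(u - l • A u) - (v - l • A v)‖ ≤ ‖u - v‖ := by
    intro l h1 h2 u hu v hv
    have hl0 : (0:ℝ) ≤ l := by linarith
    have h3 := hIsq l hl0 (by linarith) u hu v hv
    nlinarith [norm_nonneg ((u - l • A u) - (v - l • A v)), norm_nonneg (u - v),
      mul_nonneg (mul_nonneg hl0 (by linarith : (0:ℝ) ≤ 2 * ν - l))
        (sq_nonneg ‖A u - A v‖)]
  -- VI points are fixed by P ∘ (I - l A)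
  have hPfix : ∀ q, q ∈ Q → (∀ y ∈ Q, 0 ≤ ⟪A q, y - q⟫) → ∀ l : ℝ, 0 ≤ l →
      P (q - l • A q) = q := by
    intro q hq hVI l hl
    refine hPuniq _ q hq (fun y hy => ?_)
    have e : q - l • A q - q = -(l • A q) := by abel
    rw [e, inner_neg_left, real_inner_smul_left]
    have := hVI y hy
    nlinarith
  -- key chain: nonexpansiveness through the composite map
  have hchainG : ∀ t ∈ Ioc (0:ℝ) 1, ∀ q, q ∈ Q → S q = q → (∀ y ∈ Q, 0 ≤ ⟪A q, y - q⟫) →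
      ‖S (P (x t - lam t • A (x t))) - q‖ ≤ ‖x t - q‖ := by
    intro t ht q hqQ hSq hVI
    have hxtQ := hxQ t ht
    have hlamt := hlam t ht
    have e1 : ‖S (P (x t - lam t • A (x t))) - q‖
        = ‖S (P (x t - lam t • A (x t))) - S q‖ := by rw [hSq]
    have e2 := hS (P (x t - lam t • A (x t))) (hPmem _) q hqQ
    have e3 : ‖P (x t - lam t • A (x t)) - q‖
        = ‖P (x t - lam t • A (x t)) - P (q - lam t • A q)‖ := by
      rw [hPfix q hqQ hVI (lam t) (by linarith [hlamt.1])]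
    have e4 := hPnon (x t - lam t • A (x t)) (q - lam t • A q)
    have e5 := hInon (lam t) hlamt.1 hlamt.2 (x t) hxtQ q hqQ
    calc ‖S (P (x t - lam t • A (x t))) - q‖
        = ‖S (P (x t - lam t • A (x t))) - S q‖ := e1
      _ ≤ ‖P (x t - lam t • A (x t)) - q‖ := e2
      _ = ‖P (x t - lam t • A (x t)) - P (q - lam t • A q)‖ := e3
      _ ≤ ‖(x t - lam t • A (x t)) - (q - lam t • A q)‖ := e4
      _ ≤ ‖x t - q‖ := e5
  -- key inequality A
  have hkeyA : ∀ t ∈ Ioc (0:ℝ) 1, ∀ q, q ∈ Q → S q = q → (∀ y ∈ Q, 0 ≤ ⟪A q, y - q⟫) →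
      ‖x t - q‖ ^ 2 ≤ ⟪f (x t) - q, x t - q⟫ := by
    intro t ht q hqQ hSq hVI
    have hxt := hx t ht
    have hchain := hchainG t ht q hqQ hSq hVI
    have hid : x t - q = t • (f (x t) - q) + (1 - t) • (S (P (x t - lam t • A (x t))) - q) := by
      nth_rewrite 1 [hxt]; module
    have hexp : ‖x t - q‖ ^ 2 = t * ⟪f (x t) - q, x t - q⟫
        + (1 - t) * ⟪S (P (x t - lam t • A (x t))) - q, x t - q⟫ := by
      calc ‖x t - q‖ ^ 2 = ⟪x t - q, x t - q⟫ := (real_inner_self_eq_norm_sq _).symm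
        _ = ⟪t • (f (x t) - q) + (1 - t) • (S (P (x t - lam t • A (x t))) - q), x t - q⟫ := by
            rw [← hid]
        _ = _ := by rw [inner_add_left, real_inner_smul_left, real_inner_smul_left]
    have hinner2 : ⟪S (P (x t - lam t • A (x t))) - q, x t - q⟫ ≤ ‖x t - q‖ ^ 2 := by
      have h1 := real_inner_le_norm (S (P (x t - lam t • A (x t))) - q) (x t - q)
      nlinarith [norm_nonneg (x t - q)]
    have h1t : (0:ℝ) ≤ 1 - t := by linarith [ht.2]
    nlinarith [ht.1, mul_le_mul_of_nonneg_left hinner2 h1t]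
  -- key inequality B
  have hkeyB : ∀ t ∈ Ioc (0:ℝ) 1, ∀ q, q ∈ Q → S q = q → (∀ y ∈ Q, 0 ≤ ⟪A q, y - q⟫) →
      ⟪f (x t) - x t, q - x t⟫ ≤ 0 := by
    intro t ht q h1 h2 h3
    have hA1 := hkeyA t ht q h1 h2 h3
    have e : ⟪f (x t) - x t, q - x t⟫ = ‖x t - q‖ ^ 2 - ⟪f (x t) - q, x t - q⟫ := by
      simp only [inner_sub_left, inner_sub_right, ← real_inner_self_eq_norm_sq]; ring
    linarith
  -- key inequality C
  have hkeyC : ∀ t ∈ Ioc (0:ℝ) 1, ∀ q, q ∈ Q → S q = q → (∀ y ∈ Q, 0 ≤ ⟪A q, y - q⟫) →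
      (1 - ρ) * ‖x t - q‖ ^ 2 ≤ ⟪f q - q, x t - q⟫ := by
    intro t ht q h1 h2 h3
    have hA1 := hkeyA t ht q h1 h2 h3
    have hsplit : ⟪f (x t) - q, x t - q⟫
        = ⟪f (x t) - f q, x t - q⟫ + ⟪f q - q, x t - q⟫ := by
      rw [← inner_add_left]; congr 1; abel
    have hCS := real_inner_le_norm (f (x t) - f q) (x t - q)
    have hLip := hf (x t) (hxQ t ht) q h1
    nlinarith [norm_nonneg (x t - q), norm_nonneg (f (x t) - f q),
      mul_le_mul_of_nonneg_right hLip (norm_nonneg (x t - q))]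
  -- boundedness
  set M := ‖f q0 - q0‖ / (1 - ρ) with hM
  have hρpos : (0:ℝ) < 1 - ρ := by linarith
  have hMnn : 0 ≤ M := div_nonneg (norm_nonneg _) hρpos.le
  have hboundD : ∀ t ∈ Ioc (0:ℝ) 1, ‖x t - q0‖ ≤ M := by
    intro t ht
    have hC := hkeyC t ht q0 hq0Q hSq0 hVI0
    have hCS := real_inner_le_norm (f q0 - q0) (x t - q0)
    rw [hM, le_div_iff₀ hρpos]
    nlinarith [norm_nonneg (x t - q0), norm_nonneg (f q0 - q0)]
  have hxnorm : ∀ t ∈ Ioc (0:ℝ) 1, ‖x t‖ ≤ ‖q0‖ + M := by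
    intro t ht
    have h1 := hboundD t ht
    calc ‖x t‖ = ‖(x t - q0) + q0‖ := by rw [sub_add_cancel]
      _ ≤ ‖x t - q0‖ + ‖q0‖ := norm_add_le _ _
      _ ≤ ‖q0‖ + M := by linarith
  have hAnorm : ∀ t ∈ Ioc (0:ℝ) 1, ‖A (x t)‖ ≤ ‖A q0‖ + M / ν := by
    intro t ht
    have h1 := hAL (x t) (hxQ t ht) q0 hq0Q
    have h2 := hboundD t ht
    have h3 : ‖A (x t)‖ ≤ ‖A (x t) - A q0‖ + ‖A q0‖ := by
      calc ‖A (x t)‖ = ‖(A (x t) - A q0) + A q0‖ := by rw [sub_add_cancel]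
        _ ≤ _ := norm_add_le _ _
    have h4 : ‖A (x t) - A q0‖ ≤ M / ν := by
      rw [le_div_iff₀ hν]; nlinarith
    linarith
  -- uniqueness of the VP solution
  have huniq : ∀ p q : H, (p ∈ Ω ∧ ∀ y ∈ Ω, ⟪f p - p, y - p⟫ ≤ 0) →
      (q ∈ Ω ∧ ∀ y ∈ Ω, ⟪f q - q, y - q⟫ ≤ 0) → p = q := by
    intro p q hp hq
    have hpQ : p ∈ Q := ((hΩmem p).mp hp.1).1.1
    have hqQ : q ∈ Q := ((hΩmem q).mp hq.1).1.1
    have h1 := hp.2 q hq.1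
    have h2 := hq.2 p hp.1
    have e : ⟪f p - p, q - p⟫ + ⟪f q - q, p - q⟫ = ⟪f p - f q, q - p⟫ + ‖q - p‖ ^ 2 := by
      simp only [inner_sub_left, inner_sub_right, ← real_inner_self_eq_norm_sq]; ring
    have hACS := abs_real_inner_le_norm (f p - f q) (q - p)
    have hneg := neg_abs_le ⟪f p - f q, q - p⟫
    have hLip := hf p hpQ q hqQ
    have hnr : ‖q - p‖ = ‖p - q‖ := norm_sub_rev _ _
    have hmul := mul_le_mul_of_nonneg_right hLip (norm_nonneg (q - p))
    have step1 : ‖q - p‖ ^ 2 ≤ ρ * ‖p - q‖ * ‖q - p‖ := by linarith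
    have hsq2 : ρ * ‖p - q‖ * ‖q - p‖ = ρ * ‖q - p‖ ^ 2 := by rw [hnr]; ring
    have hsq : ‖q - p‖ ^ 2 ≤ 0 := by nlinarith [sq_nonneg ‖q - p‖]
    have h5 : ‖q - p‖ = 0 := by nlinarith [norm_nonneg (q - p)]
    have h6 : q - p = 0 := by simpa using h5
    exact (sub_eq_zero.mp h6).symm
  -- the filter setup
  have hIocF : Ioc (0:ℝ) 1 ∈ nhdsWithin (0:ℝ) (Ioi 0) :=
    mem_of_superset (Ioo_mem_nhdsGT one_pos) Ioo_subset_Ioc_self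
  -- the main ultrafilter lemma
  have hkeyU : ∀ U : Ultrafilter ℝ, (U : Filter ℝ) ≤ nhdsWithin 0 (Ioi 0) →
      ∃ z : H, (z ∈ Ω ∧ ∀ y ∈ Ω, ⟪f z - z, y - z⟫ ≤ 0) ∧
        Filter.Tendsto x (U : Filter ℝ) (nhds z) := by
    intro U hU
    have hev : ∀ᶠ t in (U : Filter ℝ), t ∈ Ioc (0:ℝ) 1 := hU hIocF
    have ht0 : Tendsto (fun t : ℝ => t) (U : Filter ℝ) (nhds 0) :=
      tendsto_id.mono_left (hU.trans nhdsWithin_le_nhds)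
    obtain ⟨lb, hlbmem, hlb⟩ := aux_ulim U isCompact_Icc (hev.mono fun t ht => hlam t ht)
    obtain ⟨hlb1, hlb2⟩ := hlbmem
    have hlb0 : (0:ℝ) < lb := lt_of_lt_of_le ha hlb1
    have hlbν : lb < 2 * ν := lt_of_le_of_lt hlb2 hb2
    obtain ⟨z, hz⟩ := aux_weak U x (‖q0‖ + M) (hev.mono fun t ht => hxnorm t ht)
    -- z ∈ Q
    have hzQ : z ∈ Q := by
      have h1 : ∀ᶠ t in (U : Filter ℝ), ⟪z - P z, x t - P z⟫ ≤ 0 :=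
        hev.mono fun t ht => hP z (x t) (hxQ t ht)
      have h3 : ∀ t : ℝ, ⟪z - P z, x t - P z⟫ = ⟪x t, z - P z⟫ - ⟪z - P z, P z⟫ := by
        intro t; rw [inner_sub_right, real_inner_comm (z - P z) (x t)]
      have h2 : Tendsto (fun t => ⟪z - P z, x t - P z⟫) (U : Filter ℝ)
          (nhds ⟪z - P z, z - P z⟫) := by
        simp only [h3]
        have hval : ⟪z - P z, z - P z⟫ = ⟪z, z - P z⟫ - ⟪z - P z, P z⟫ := by
          rw [inner_sub_right, real_inner_comm (z - P z) z]
        rw [hval]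
        exact (hz (z - P z)).sub_const _
      have h4 : ⟪z - P z, z - P z⟫ ≤ 0 := le_of_tendsto h2 h1
      have h5 : ‖z - P z‖ ^ 2 ≤ 0 := by
        rw [← real_inner_self_eq_norm_sq]; exact h4
      have h6 : ‖z - P z‖ = 0 := by nlinarith [norm_nonneg (z - P z)]
      have h7 : z - P z = 0 := by simpa using h6
      rw [sub_eq_zero.mp h7]; exact hPmem z
    -- the limit operator T
    set T : H → H := fun w => S (P (w - lb • A w)) with hT
    have hTnon : ∀ u ∈ Q, ∀ v ∈ Q, ‖T u - T v‖ ≤ ‖u - v‖ := by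
      intro u hu v hv
      have hI := hIsq lb hlb0.le hlbν.le u hu v hv
      have hIn : ‖(u - lb • A u) - (v - lb • A v)‖ ≤ ‖u - v‖ := by
        nlinarith [norm_nonneg ((u - lb • A u) - (v - lb • A v)), norm_nonneg (u - v),
          mul_nonneg (mul_nonneg hlb0.le (by linarith : (0:ℝ) ≤ 2 * ν - lb))
            (sq_nonneg ‖A u - A v‖)]
      calc ‖T u - T v‖ ≤ ‖P (u - lb • A u) - P (v - lb • A v)‖ :=
            hS _ (hPmem _) _ (hPmem _)
        _ ≤ ‖(u - lb • A u) - (v - lb • A v)‖ := hPnon _ _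
        _ ≤ ‖u - v‖ := hIn
    -- ‖x t - T (x t)‖ → 0 along U
    have hxT : Tendsto (fun t => ‖x t - T (x t)‖) (U : Filter ℝ) (nhds 0) := by
      set C1 : ℝ := ρ * M + ‖f q0 - q0‖ + M with hC1
      set C2 : ℝ := ‖A q0‖ + M / ν with hC2
      have hbnd : ∀ᶠ t in (U : Filter ℝ),
          ‖x t - T (x t)‖ ≤ t * C1 + |lam t - lb| * C2 := by
        refine hev.mono fun t ht => ?_
        have hxt := hx t ht
        have hxtQ := hxQ t ht
        have h1 : x t - S (P (x t - lam t • A (x t)))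
            = t • (f (x t) - S (P (x t - lam t • A (x t)))) := by
          nth_rewrite 1 [hxt]; module
        have h2 : ‖f (x t) - S (P (x t - lam t • A (x t)))‖ ≤ C1 := by
          have hc := hchainG t ht q0 hq0Q hSq0 hVI0
          have hb := hboundD t ht
          have hfl := hf (x t) hxtQ q0 hq0Q
          calc ‖f (x t) - S (P (x t - lam t • A (x t)))‖
              = ‖(f (x t) - f q0) + (f q0 - q0) + (q0 - S (P (x t - lam t • A (x t))))‖ := by
                congr 1; abel
            _ ≤ ‖(f (x t) - f q0) + (f q0 - q0)‖
                + ‖q0 - S (P (x t - lam t • A (x t)))‖ := norm_add_le _ _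
            _ ≤ ‖f (x t) - f q0‖ + ‖f q0 - q0‖
                + ‖q0 - S (P (x t - lam t • A (x t)))‖ := by
                linarith [norm_add_le (f (x t) - f q0) (f q0 - q0)]
            _ ≤ C1 := by
                have hc' : ‖q0 - S (P (x t - lam t • A (x t)))‖ ≤ M := by
                  rw [norm_sub_rev]; linarith
                have hρM : ρ * ‖x t - q0‖ ≤ ρ * M := mul_le_mul_of_nonneg_left hb hρ0
                rw [hC1]
                linarith
        have h3 : ‖S (P (x t - lam t • A (x t))) - T (x t)‖ ≤ |lam t - lb| * C2 := by
          have h4 := hS (P (x t - lam t • A (x t))) (hPmem _) (P (x t - lb • A (x t))) (hPmem _)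
          have h5 : (x t - lam t • A (x t)) - (x t - lb • A (x t))
              = (lb - lam t) • A (x t) := by module
          have h6 : ‖(lb - lam t) • A (x t)‖ = |lb - lam t| * ‖A (x t)‖ := by
            rw [norm_smul, Real.norm_eq_abs]
          have h7 := hAnorm t ht
          calc ‖S (P (x t - lam t • A (x t))) - T (x t)‖
              ≤ ‖P (x t - lam t • A (x t)) - P (x t - lb • A (x t))‖ := h4
            _ ≤ ‖(x t - lam t • A (x t)) - (x t - lb • A (x t))‖ := hPnon _ _
            _ = |lb - lam t| * ‖A (x t)‖ := by rw [h5, h6]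
            _ ≤ |lam t - lb| * C2 := by
                rw [abs_sub_comm]
                exact mul_le_mul_of_nonneg_left h7 (abs_nonneg _)
        have htriangle : ‖x t - T (x t)‖ ≤ ‖x t - S (P (x t - lam t • A (x t)))‖
            + ‖S (P (x t - lam t • A (x t))) - T (x t)‖ := by
          have : x t - T (x t) = (x t - S (P (x t - lam t • A (x t))))
              + (S (P (x t - lam t • A (x t))) - T (x t)) := by abel
          rw [this]; exact norm_add_le _ _
        have h8 : ‖x t - S (P (x t - lam t • A (x t)))‖
            = t * ‖f (x t) - S (P (x t - lam t • A (x t)))‖ := by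
          rw [h1, norm_smul, Real.norm_eq_abs, abs_of_pos ht.1]
        have h9 : t * ‖f (x t) - S (P (x t - lam t • A (x t)))‖ ≤ t * C1 :=
          mul_le_mul_of_nonneg_left h2 ht.1.le
        linarith
      have hrhs : Tendsto (fun t => t * C1 + |lam t - lb| * C2) (U : Filter ℝ) (nhds 0) := by
        have g1 : Tendsto (fun t : ℝ => t * C1) (U : Filter ℝ) (nhds 0) := by
          simpa using ht0.mul_const C1
        have g2 : Tendsto (fun t => |lam t - lb|) (U : Filter ℝ) (nhds 0) := by
          have := (hlb.sub_const lb).abs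
          simpa using this
        have g3 : Tendsto (fun t => |lam t - lb| * C2) (U : Filter ℝ) (nhds 0) := by
          simpa using g2.mul_const C2
        simpa using g1.add g3
      exact squeeze_zero' (hev.mono fun t _ => norm_nonneg _) hbnd hrhs
    -- demiclosedness: T z = z
    have hTz : T z = z := by
      set w := z - T z with hw
      have hb1 : ∀ᶠ t in (U : Filter ℝ), ‖w‖ ^ 2 ≤ ‖x t - T (x t)‖ ^ 2
          + 2 * ‖x t - T (x t)‖ * (‖q0‖ + M + ‖z‖) - 2 * (⟪x t, w⟫ - ⟪z, w⟫) := by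
        refine hev.mono fun t ht => ?_
        have hxtQ := hxQ t ht
        have e1 : ‖x t - T z‖ ≤ ‖x t - T (x t)‖ + ‖x t - z‖ := by
          have htr : x t - T z = (x t - T (x t)) + (T (x t) - T z) := by abel
          calc ‖x t - T z‖ ≤ ‖x t - T (x t)‖ + ‖T (x t) - T z‖ := by
                rw [htr]; exact norm_add_le _ _
            _ ≤ _ := by linarith [hTnon (x t) hxtQ z hzQ]
        have e1sq : ‖x t - T z‖ ^ 2 ≤ (‖x t - T (x t)‖ + ‖x t - z‖) ^ 2 :=
          pow_le_pow_left₀ (norm_nonneg _) e1 2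
        have e2 : ‖x t - T z‖ ^ 2 = ‖x t - z‖ ^ 2 + 2 * ⟪x t - z, w⟫ + ‖w‖ ^ 2 := by
          have hxw : x t - T z = (x t - z) + w := by rw [hw]; abel
          rw [hxw, norm_add_sq_real]
        have e3 : ‖x t - z‖ ≤ ‖q0‖ + M + ‖z‖ := by
          have := hxnorm t ht
          calc ‖x t - z‖ ≤ ‖x t‖ + ‖z‖ := norm_sub_le _ _
            _ ≤ _ := by linarith
        have e4 : ⟪x t - z, w⟫ = ⟪x t, w⟫ - ⟪z, w⟫ := inner_sub_left _ _ _
        have e5 : 0 ≤ ‖x t - T (x t)‖ := norm_nonneg _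
        nlinarith [mul_le_mul_of_nonneg_left e3 e5]
      have hb2 : Tendsto (fun t => ‖x t - T (x t)‖ ^ 2
          + 2 * ‖x t - T (x t)‖ * (‖q0‖ + M + ‖z‖) - 2 * (⟪x t, w⟫ - ⟪z, w⟫))
          (U : Filter ℝ) (nhds 0) := by
        have gsq : Tendsto (fun t => ‖x t - T (x t)‖ ^ 2) (U : Filter ℝ) (nhds 0) := by
          have := hxT.mul hxT
          simpa [pow_two] using this
        have glin : Tendsto (fun t => 2 * ‖x t - T (x t)‖ * (‖q0‖ + M + ‖z‖))
            (U : Filter ℝ) (nhds 0) := by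
          have := (hxT.const_mul 2).mul_const (‖q0‖ + M + ‖z‖)
          simpa [mul_assoc] using this
        have ginner : Tendsto (fun t => 2 * (⟪x t, w⟫ - ⟪z, w⟫)) (U : Filter ℝ) (nhds 0) := by
          have := ((hz w).sub_const ⟪z, w⟫).const_mul 2
          simpa using this
        have := (gsq.add glin).sub ginner
        simpa using this
      have h4 : ‖w‖ ^ 2 ≤ 0 := ge_of_tendsto hb2 hb1
      have h5 : ‖w‖ = 0 := by nlinarith [norm_nonneg w]
      have h6 : w = 0 := by simpa using h5
      exact (sub_eq_zero.mp h6).symm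
    -- z ∈ Ω via the equality case
    have hPvz : P (q0 - lb • A q0) = q0 := hPfix q0 hq0Q hVI0 lb hlb0.le
    have hTz' : S (P (z - lb • A z)) = z := hTz
    have hfirm := hPfirm (z - lb • A z) (q0 - lb • A q0)
    rw [hPvz] at hfirm
    have h2 : ‖((z - lb • A z) - P (z - lb • A z)) - ((q0 - lb • A q0) - q0)‖ ^ 2
        ≤ ‖(z - lb • A z) - (q0 - lb • A q0)‖ ^ 2 - ‖P (z - lb • A z) - q0‖ ^ 2 := by
      have e : ((z - lb • A z) - P (z - lb • A z)) - ((q0 - lb • A q0) - q0)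
          = ((z - lb • A z) - (q0 - lb • A q0)) - (P (z - lb • A z) - q0) := by abel
      rw [e, norm_sub_sq_real]
      linarith
    have h3 := hIsq lb hlb0.le hlbν.le z hzQ q0 hq0Q
    have h4 : ‖z - q0‖ ≤ ‖P (z - lb • A z) - q0‖ := by
      have hh := hS (P (z - lb • A z)) (hPmem _) (P (q0 - lb • A q0)) (hPmem _)
      rw [hPvz, hSq0, hTz'] at hh
      exact hh
    have h4sq : ‖z - q0‖ ^ 2 ≤ ‖P (z - lb • A z) - q0‖ ^ 2 :=
      pow_le_pow_left₀ (norm_nonneg _) h4 2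
    have h5 : lb * (2 * ν - lb) * ‖A z - A q0‖ ^ 2
        + ‖((z - lb • A z) - P (z - lb • A z)) - ((q0 - lb • A q0) - q0)‖ ^ 2 ≤ 0 := by
      linarith
    have c1 : (0:ℝ) < lb * (2 * ν - lb) := mul_pos hlb0 (by linarith)
    have hAz : A z = A q0 := by
      have hs1 : ‖A z - A q0‖ ^ 2 ≤ 0 := by
        nlinarith [sq_nonneg ‖((z - lb • A z) - P (z - lb • A z)) - ((q0 - lb • A q0) - q0)‖]
      have hs2 : ‖A z - A q0‖ = 0 := by nlinarith [norm_nonneg (A z - A q0)]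
      have := norm_eq_zero.mp hs2
      exact sub_eq_zero.mp this
    have hupu : ((z - lb • A z) - P (z - lb • A z)) - ((q0 - lb • A q0) - q0) = 0 := by
      have hs1 : ‖((z - lb • A z) - P (z - lb • A z)) - ((q0 - lb • A q0) - q0)‖ ^ 2 ≤ 0 := by
        nlinarith [mul_nonneg c1.le (sq_nonneg ‖A z - A q0‖)]
      have hs2 : ‖((z - lb • A z) - P (z - lb • A z)) - ((q0 - lb • A q0) - q0)‖ = 0 := by
        nlinarith [norm_nonneg (((z - lb • A z) - P (z - lb • A z)) - ((q0 - lb • A q0) - q0))]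
      exact norm_eq_zero.mp hs2
    have hPuz : P (z - lb • A z) = z := by
      have e1 : (z - lb • A z) - P (z - lb • A z) = (q0 - lb • A q0) - q0 :=
        sub_eq_zero.mp hupu
      have e2 : P (z - lb • A z) = (z - lb • A z) - ((q0 - lb • A q0) - q0) := by
        rw [← e1]; abel
      rw [e2, hAz]; module
    have hSz : S z = z := by
      nth_rewrite 1 [← hPuz]
      exact hTz'
    have hVIz : ∀ y ∈ Q, 0 ≤ ⟪A z, y - z⟫ := by
      intro y hy
      have hh := hP (z - lb • A z) y hy
      rw [hPuz] at hh
      have e : (z - lb • A z) - z = -(lb • A z) := by abel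
      rw [e, inner_neg_left, real_inner_smul_left] at hh
      nlinarith
    have hzΩ : z ∈ Ω := (hΩmem z).mpr ⟨⟨hzQ, hSz⟩, hzQ, hVIz⟩
    -- strong convergence x t → z along U
    have h1ev : ∀ᶠ t in (U : Filter ℝ),
        (1 - ρ) * ‖x t - z‖ ^ 2 ≤ ⟪f z - z, x t⟫ - ⟪f z - z, z⟫ := by
      refine hev.mono fun t ht => ?_
      have hC := hkeyC t ht z hzQ hSz hVIz
      have e : ⟪f z - z, x t - z⟫ = ⟪f z - z, x t⟫ - ⟪f z - z, z⟫ := inner_sub_right _ _ _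
      linarith
    have h2t : Tendsto (fun t => ⟪f z - z, x t⟫ - ⟪f z - z, z⟫) (U : Filter ℝ) (nhds 0) := by
      have h3 : ∀ t : ℝ, ⟪f z - z, x t⟫ = ⟪x t, f z - z⟫ := fun t => real_inner_comm _ _
      simp only [h3]
      have h4 : (0:ℝ) = ⟪z, f z - z⟫ - ⟪f z - z, z⟫ := by
        rw [real_inner_comm z (f z - z)]; ring
      rw [h4]
      exact (hz (f z - z)).sub_const _
    have hsq0 : Tendsto (fun t => ‖x t - z‖ ^ 2) (U : Filter ℝ) (nhds 0) := by
      refine squeeze_zero' (hev.mono fun t _ => sq_nonneg _)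
        (h1ev.mono fun t ht => ?_) (by simpa using h2t.div_const (1 - ρ))
      rw [le_div_iff₀ hρpos]
      linarith [ht]
    have hnorm0 : Tendsto (fun t => ‖x t - z‖) (U : Filter ℝ) (nhds 0) := by
      have h := (Real.continuous_sqrt.tendsto 0).comp hsq0
      rw [Real.sqrt_zero] at h
      exact h.congr fun t => Real.sqrt_sq (norm_nonneg _)
    have hstrong : Tendsto x (U : Filter ℝ) (nhds z) :=
      tendsto_iff_norm_sub_tendsto_zero.mpr hnorm0
    -- the variational property
    have hVP : ∀ y ∈ Ω, ⟪f z - z, y - z⟫ ≤ 0 := by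
      intro y hy
      obtain ⟨⟨hyQ, hSy⟩, -, hVIy⟩ := (hΩmem y).mp hy
      have h1 : ∀ᶠ t in (U : Filter ℝ), ⟪f (x t) - x t, y - x t⟫ ≤ 0 :=
        hev.mono fun t ht => hkeyB t ht y hyQ hSy hVIy
      have hfx : Tendsto (fun t => f (x t)) (U : Filter ℝ) (nhds (f z)) := by
        rw [tendsto_iff_norm_sub_tendsto_zero]
        refine squeeze_zero' (hev.mono fun t _ => norm_nonneg _)
          (hev.mono fun t ht => hf (x t) (hxQ t ht) z hzQ) ?_
        simpa using hnorm0.const_mul ρ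
      have h2 : Tendsto (fun t => ⟪f (x t) - x t, y - x t⟫) (U : Filter ℝ)
          (nhds ⟪f z - z, y - z⟫) :=
        Filter.Tendsto.inner (hfx.sub hstrong)
          ((tendsto_const_nhds (x := y)).sub hstrong)
      exact le_of_tendsto h2 h1
    exact ⟨z, ⟨hzΩ, hVP⟩, hstrong⟩
  -- conclusion
  obtain ⟨qstar, hqsol, hqtend⟩ := hkeyU (Ultrafilter.of (nhdsWithin 0 (Ioi 0)))
    (Ultrafilter.of_le _)
  refine ⟨qstar, hqsol, fun q hq => huniq q qstar hq hqsol, ?_⟩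
  rw [Filter.tendsto_iff_ultrafilter]
  intro U hU
  obtain ⟨z, hzsol, hztend⟩ := hkeyU U hU
  rwa [huniq z qstar hzsol hqsol] at hztend
end

section
/- Let H be a real Hilbert space, Q ⊆ H a nonempty closed convex set, ν > 0, A : Q → H a ν-inverse strongly monotone operator, S : Q → Q a nonexpansive mapping, f : Q → Q a contraction with coefficient ρ ∈ [0,1), 0 < a < b < 2ν, and λ : (0,1] → [a,b]. Assume Ω = Fix(S) ∩ S_VI(A,Q) is nonempty, and for each t ∈ (0,1] let x_t ∈ Q be the unique point with x_t = t·f(x_t) + (1 − t)·S(P_Q(x_t − λ(t)·A x_t)). Then for every q ∈ Ω, sup_{t ∈ (0,1]} ‖x_t − q‖ ≤ (1/(1 − ρ))·‖f(q) − q‖; in particular the family {x_t}_{t ∈ (0,1]} is bounded in H. -/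
open scoped RealInnerProductSpace

/-- For the implicit path `x_t` and any `q ∈ Ω = Fix(S) ∩ S_VI(A,Q)`,
`sup_{t ∈ (0,1]} ‖x_t - q‖ ≤ ‖f(q) - q‖/(1 - ρ)`; in particular the family
`{x_t}` is bounded. -/
theorem stmt_9 {H : Type*} [NormedAddCommGroup H] [InnerProductSpace ℝ H] [CompleteSpace H]
    (Q : Set H) (hQne : Q.Nonempty) (hQclosed : IsClosed Q) (hQconvex : Convex ℝ Q)
    (ν : ℝ) (hν : 0 < ν)
    (A : H → H) (hA : ∀ x ∈ Q, ∀ y ∈ Q, ν * ‖A x - A y‖ ^ 2 ≤ ⟪A x - A y, x - y⟫)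
    (P : H → H) (hPmem : ∀ x, P x ∈ Q)
    (hP : ∀ (x : H), ∀ y ∈ Q, ⟪x - P x, y - P x⟫ ≤ 0)
    (S : H → H) (hSmem : ∀ x ∈ Q, S x ∈ Q)
    (hS : ∀ x ∈ Q, ∀ y ∈ Q, ‖S x - S y‖ ≤ ‖x - y‖)
    (ρ : ℝ) (hρ : ρ ∈ Set.Ico (0 : ℝ) 1)
    (f : H → H) (hfmem : ∀ x ∈ Q, f x ∈ Q)
    (hf : ∀ x ∈ Q, ∀ y ∈ Q, ‖f x - f y‖ ≤ ρ * ‖x - y‖)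
    (a b : ℝ) (hab : 0 < a ∧ a < b ∧ b < 2 * ν)
    (lam : ℝ → ℝ) (hlam : ∀ t ∈ Set.Ioc (0 : ℝ) 1, lam t ∈ Set.Icc a b)
    (Ω : Set H)
    (hΩ : Ω = {x : H | x ∈ Q ∧ S x = x} ∩ {q : H | q ∈ Q ∧ ∀ x ∈ Q, 0 ≤ ⟪A q, x - q⟫})
    (hΩne : Ω.Nonempty)
    (x : ℝ → H) (hxQ : ∀ t ∈ Set.Ioc (0 : ℝ) 1, x t ∈ Q)
    (hx : ∀ t ∈ Set.Ioc (0 : ℝ) 1,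
      x t = t • f (x t) + (1 - t) • S (P (x t - lam t • A (x t)))) :
    (∀ q ∈ Ω, ∀ t ∈ Set.Ioc (0 : ℝ) 1, ‖x t - q‖ ≤ (1 / (1 - ρ)) * ‖f q - q‖) ∧
      ∃ M : ℝ, ∀ t ∈ Set.Ioc (0 : ℝ) 1, ‖x t‖ ≤ M := by
  obtain ⟨ha, hab', hb2ν⟩ := hab
  obtain ⟨hρ0, hρ1⟩ := hρ
  have h1ρ : 0 < 1 - ρ := by linarith
  -- P is nonexpansive
  have hPne : ∀ u v : H, ‖P u - P v‖ ≤ ‖u - v‖ := by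
    intro u v
    have h1 : ⟪u - P u, P v - P u⟫ ≤ 0 := hP u (P v) (hPmem v)
    have h2 : ⟪v - P v, P u - P v⟫ ≤ 0 := hP v (P u) (hPmem u)
    have h1' : 0 ≤ ⟪u - P u, P u - P v⟫ := by
      rw [show P u - P v = -(P v - P u) by abel, inner_neg_right]
      linarith
    have key : ‖P u - P v‖ ^ 2 ≤ ⟪u - v, P u - P v⟫ := by
      have e : ⟪u - v, P u - P v⟫
          = ⟪u - P u, P u - P v⟫ - ⟪v - P v, P u - P v⟫ + ‖P u - P v‖ ^ 2 := by
        rw [← real_inner_self_eq_norm_sq]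
        simp only [inner_sub_left]
        ring
      rw [e]; linarith
    have cs : ⟪u - v, P u - P v⟫ ≤ ‖u - v‖ * ‖P u - P v‖ := real_inner_le_norm _ _
    by_cases hz : ‖P u - P v‖ = 0
    · rw [hz]; positivity
    · have hpos : 0 < ‖P u - P v‖ := lt_of_le_of_ne (norm_nonneg _) (Ne.symm hz)
      nlinarith
  have hbound : ∀ q ∈ Ω, ∀ t ∈ Set.Ioc (0 : ℝ) 1,
      ‖x t - q‖ ≤ (1 / (1 - ρ)) * ‖f q - q‖ := by
    intro q hqΩ t ht
    rw [hΩ] at hqΩ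
    obtain ⟨⟨hqQ, hSq⟩, _, hVI⟩ := hqΩ
    obtain ⟨ht0, ht1⟩ := ht
    set lt := lam t with hlt
    have hltmem := hlam t ⟨ht0, ht1⟩
    have hlt0 : 0 ≤ lt := le_trans ha.le hltmem.1
    have hlt2ν : lt ≤ 2 * ν := le_trans hltmem.2 hb2ν.le
    have hxtQ := hxQ t ⟨ht0, ht1⟩
    -- q is fixed under z ↦ P (z - lt • A z)
    have hqfix : P (q - lt • A q) = q := by
      set p := P (q - lt • A q) with hp
      have h1 : ⟪(q - lt • A q) - p, q - p⟫ ≤ 0 := hP _ q hqQ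
      have h2 : 0 ≤ ⟪A q, p - q⟫ := hVI p (hPmem _)
      have e2 : ⟪A q, q - p⟫ = -⟪A q, p - q⟫ := by
        rw [show q - p = -(p - q) by abel, inner_neg_right]
      have e : ⟪q - p, q - p⟫
          = ⟪(q - lt • A q) - p, q - p⟫ + lt * ⟪A q, q - p⟫ := by
        simp only [inner_sub_left, real_inner_smul_left]
        ring
      have hle : ⟪q - p, q - p⟫ ≤ 0 := by rw [e, e2]; nlinarith
      have hz : ‖q - p‖ ^ 2 ≤ 0 := by rwa [← real_inner_self_eq_norm_sq]
      have h0 : ‖q - p‖ = 0 := le_antisymm (by nlinarith [norm_nonneg (q - p)]) (norm_nonneg _)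
      have := sub_eq_zero.mp (norm_eq_zero.mp h0)
      exact this.symm
    -- the operator z ↦ z - lt • A z is nonexpansive between x t and q
    have hTne : ‖(x t - lt • A (x t)) - (q - lt • A q)‖ ≤ ‖x t - q‖ := by
      set w := x t - q with hw
      set d := A (x t) - A q with hd
      have e : (x t - lt • A (x t)) - (q - lt • A q) = w - lt • d := by
        simp only [hw, hd, smul_sub]; abel
      have ism := hA (x t) hxtQ q hqQ
      rw [← hw, ← hd] at ism
      have hcm : ⟪d, w⟫ = ⟪w, d⟫ := real_inner_comm _ _
      have h1 : ν * ‖d‖ ^ 2 ≤ ⟪w, d⟫ := by rw [← hcm]; exact ism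
      have h2 : 0 ≤ lt * (2 * ν - lt) * ‖d‖ ^ 2 :=
        mul_nonneg (mul_nonneg hlt0 (by linarith)) (sq_nonneg _)
      have expand : ‖w - lt • d‖ ^ 2 = ‖w‖ ^ 2 - 2 * lt * ⟪w, d⟫ + lt ^ 2 * ‖d‖ ^ 2 := by
        rw [norm_sub_sq_real, real_inner_smul_right, norm_smul]
        rw [Real.norm_eq_abs, mul_pow, sq_abs]
        ring
      have hle : ‖w - lt • d‖ ^ 2 ≤ ‖w‖ ^ 2 := by
        rw [expand]; nlinarith [h1, h2, sq_nonneg ‖d‖, mul_le_mul_of_nonneg_left h1 hlt0]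
      rw [e]
      nlinarith [norm_nonneg (w - lt • d), norm_nonneg w]
    set y := P (x t - lt • A (x t)) with hy
    have hSyq : ‖S y - q‖ ≤ ‖x t - q‖ := by
      calc ‖S y - q‖ = ‖S y - S q‖ := by rw [hSq]
        _ ≤ ‖y - q‖ := hS y (hPmem _) q hqQ
        _ = ‖P (x t - lt • A (x t)) - P (q - lt • A q)‖ := by rw [hy, hqfix]
        _ ≤ ‖(x t - lt • A (x t)) - (q - lt • A q)‖ := hPne _ _
        _ ≤ ‖x t - q‖ := hTne
    have hfb : ‖f (x t) - q‖ ≤ ρ * ‖x t - q‖ + ‖f q - q‖ := by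
      calc ‖f (x t) - q‖ ≤ ‖f (x t) - f q‖ + ‖f q - q‖ := norm_sub_le_norm_sub_add_norm_sub _ _ _
        _ ≤ ρ * ‖x t - q‖ + ‖f q - q‖ := by
            have := hf (x t) hxtQ q hqQ; linarith
    have hdecomp : x t - q = t • (f (x t) - q) + (1 - t) • (S y - q) := by
      nth_rewrite 1 [hx t ⟨ht0, ht1⟩]
      rw [hy, hlt]
      module
    have hmain : ‖x t - q‖ ≤ t * (ρ * ‖x t - q‖ + ‖f q - q‖) + (1 - t) * ‖x t - q‖ := by
      calc ‖x t - q‖ = ‖t • (f (x t) - q) + (1 - t) • (S y - q)‖ := by rw [← hdecomp]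
        _ ≤ ‖t • (f (x t) - q)‖ + ‖(1 - t) • (S y - q)‖ := norm_add_le _ _
        _ = t * ‖f (x t) - q‖ + (1 - t) * ‖S y - q‖ := by
            rw [norm_smul, norm_smul, Real.norm_eq_abs, Real.norm_eq_abs,
              abs_of_pos ht0, abs_of_nonneg (by linarith : (0:ℝ) ≤ 1 - t)]
        _ ≤ t * (ρ * ‖x t - q‖ + ‖f q - q‖) + (1 - t) * ‖x t - q‖ := by
            have h1 := mul_le_mul_of_nonneg_left hfb ht0.le
            have h2 := mul_le_mul_of_nonneg_left hSyq (by linarith : (0:ℝ) ≤ 1 - t)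
            linarith
    have key : (1 - ρ) * ‖x t - q‖ ≤ ‖f q - q‖ := by
      have h : t * ((1 - ρ) * ‖x t - q‖) ≤ t * ‖f q - q‖ := by nlinarith
      exact le_of_mul_le_mul_left h ht0
    rw [one_div, ← div_eq_inv_mul, le_div_iff₀ h1ρ]
    linarith [key]
  refine ⟨hbound, ?_⟩
  obtain ⟨q, hqΩ⟩ := hΩne
  refine ⟨‖q‖ + (1 / (1 - ρ)) * ‖f q - q‖, fun t ht => ?_⟩
  have := hbound q hqΩ t ht
  calc ‖x t‖ ≤ ‖x t - q‖ + ‖q‖ := by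
        have := norm_add_le (x t - q) q; simpa using this
    _ ≤ ‖q‖ + (1 / (1 - ρ)) * ‖f q - q‖ := by linarith
end

section
/- Let H be a real Hilbert space, Q ⊆ H a nonempty closed convex set, ν > 0, A : Q → H a ν-inverse strongly monotone operator, S : Q → Q a nonexpansive mapping, f : Q → Q a contraction with coefficient ρ ∈ [0,1), 0 < a < b < 2ν, and λ : (0,1] → [a,b]. Assume Ω = Fix(S) ∩ S_VI(A,Q) is nonempty, and for each t ∈ (0,1] let x_t ∈ Q be the unique point with x_t = t·f(x_t) + (1 − t)·S(P_Q(x_t − λ(t)·A x_t)), and set z_t = P_Q(x_t − λ(t)·A x_t). Then ‖x_t − z_t‖ → 0 as t → 0⁺. -/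
open scoped RealInnerProductSpace

section aux
variable {H : Type*} [NormedAddCommGroup H] [InnerProductSpace ℝ H]

lemma aux_firm (Q : Set H) (P : H → H) (hPmem : ∀ x, P x ∈ Q)
    (hP : ∀ (x : H), ∀ y ∈ Q, ⟪x - P x, y - P x⟫ ≤ 0) (v w : H) :
    ‖P v - P w‖ ^ 2 ≤ ⟪v - w, P v - P w⟫ := by
  have h1 := hP v (P w) (hPmem w)
  have h2 := hP w (P v) (hPmem v)
  have e1 : ⟪v - w, P v - P w⟫ - ‖P v - P w‖ ^ 2
      = -⟪v - P v, P w - P v⟫ - ⟪w - P w, P v - P w⟫ := by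
    rw [← real_inner_self_eq_norm_sq]
    simp only [inner_sub_left, inner_sub_right]
    ring
  linarith

lemma aux_proj_eq (Q : Set H) (P : H → H) (hPmem : ∀ x, P x ∈ Q)
    (hP : ∀ (x : H), ∀ y ∈ Q, ⟪x - P x, y - P x⟫ ≤ 0) (v u : H) (hu : u ∈ Q)
    (h : ∀ y ∈ Q, ⟪v - u, y - u⟫ ≤ 0) : P v = u := by
  have h1 := hP v u hu
  have h2 := h (P v) (hPmem v)
  have e : ⟪u - P v, u - P v⟫ = ⟪v - P v, u - P v⟫ + ⟪v - u, P v - u⟫ := by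
    simp only [inner_sub_left, inner_sub_right]
    ring
  have hz : u - P v = 0 := by
    rw [← @real_inner_self_nonpos H _ _ (u - P v)]; linarith
  exact (sub_eq_zero.mp hz).symm

lemma aux_nonexp (Q : Set H) (P : H → H) (hPmem : ∀ x, P x ∈ Q)
    (hP : ∀ (x : H), ∀ y ∈ Q, ⟪x - P x, y - P x⟫ ≤ 0) (v w : H) :
    ‖P v - P w‖ ≤ ‖v - w‖ := by
  have h1 := aux_firm Q P hPmem hP v w
  have h2 := real_inner_le_norm (v - w) (P v - P w)
  nlinarith [norm_nonneg (P v - P w), norm_nonneg (v - w)]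

lemma aux_expand (u e : H) (r : ℝ) :
    ‖u - r • e‖ ^ 2 = ‖u‖ ^ 2 - 2 * r * ⟪u, e⟫ + r ^ 2 * ‖e‖ ^ 2 := by
  rw [norm_sub_sq_real, real_inner_smul_right, norm_smul]
  simp [mul_pow, sq_abs]
  ring

end aux

set_option maxHeartbeats 1000000 in
/-- With `z_t = P_Q(x_t - λ(t) A x_t)`, one has `‖x_t - z_t‖ → 0` as `t → 0⁺`. -/
theorem stmt_10 {H : Type*} [NormedAddCommGroup H] [InnerProductSpace ℝ H] [CompleteSpace H]
    (Q : Set H) (hQne : Q.Nonempty) (hQclosed : IsClosed Q) (hQconvex : Convex ℝ Q)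
    (ν : ℝ) (hν : 0 < ν)
    (A : H → H) (hA : ∀ x ∈ Q, ∀ y ∈ Q, ν * ‖A x - A y‖ ^ 2 ≤ ⟪A x - A y, x - y⟫)
    (P : H → H) (hPmem : ∀ x, P x ∈ Q)
    (hP : ∀ (x : H), ∀ y ∈ Q, ⟪x - P x, y - P x⟫ ≤ 0)
    (S : H → H) (hSmem : ∀ x ∈ Q, S x ∈ Q)
    (hS : ∀ x ∈ Q, ∀ y ∈ Q, ‖S x - S y‖ ≤ ‖x - y‖)
    (ρ : ℝ) (hρ : ρ ∈ Set.Ico (0 : ℝ) 1)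
    (f : H → H) (hfmem : ∀ x ∈ Q, f x ∈ Q)
    (hf : ∀ x ∈ Q, ∀ y ∈ Q, ‖f x - f y‖ ≤ ρ * ‖x - y‖)
    (a b : ℝ) (hab : 0 < a ∧ a < b ∧ b < 2 * ν)
    (lam : ℝ → ℝ) (hlam : ∀ t ∈ Set.Ioc (0 : ℝ) 1, lam t ∈ Set.Icc a b)
    (Ω : Set H)
    (hΩ : Ω = {x : H | x ∈ Q ∧ S x = x} ∩ {q : H | q ∈ Q ∧ ∀ x ∈ Q, 0 ≤ ⟪A q, x - q⟫})
    (hΩne : Ω.Nonempty)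
    (x : ℝ → H) (hxQ : ∀ t ∈ Set.Ioc (0 : ℝ) 1, x t ∈ Q)
    (hx : ∀ t ∈ Set.Ioc (0 : ℝ) 1,
      x t = t • f (x t) + (1 - t) • S (P (x t - lam t • A (x t)))) :
    Filter.Tendsto (fun t => ‖x t - P (x t - lam t • A (x t))‖)
      (nhdsWithin 0 (Set.Ioi (0 : ℝ))) (nhds 0) := by
  obtain ⟨ha, hab', hb2ν⟩ := hab
  obtain ⟨p, hpmem⟩ := hΩne
  rw [hΩ] at hpmem
  obtain ⟨⟨hpQ, hSp⟩, -, hVI⟩ := hpmem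
  obtain ⟨hρ0, hρ1⟩ := hρ
  set D := ‖f p - p‖ with hDdef
  have hD0 : 0 ≤ D := norm_nonneg _
  have h1ρ : 0 < 1 - ρ := by linarith
  set M := D / (1 - ρ) with hMdef
  have hM0 : 0 ≤ M := div_nonneg hD0 h1ρ.le
  have hDM : D = (1 - ρ) * M := by
    rw [hMdef, mul_div_assoc', mul_comm, mul_div_assoc, div_self h1ρ.ne', mul_one]
  set c := a * (2 * ν - b) with hcdef
  have hc0 : 0 < c := mul_pos ha (by linarith)
  -- projection fixes p - λ A p
  have hPfix : ∀ t ∈ Set.Ioc (0 : ℝ) 1, P (p - lam t • A p) = p := by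
    intro t ht
    obtain ⟨hta, htb⟩ := hlam t ht
    refine aux_proj_eq Q P hPmem hP _ p hpQ ?_
    intro y hy
    have h1 := hVI y hy
    have h2 : p - lam t • A p - p = -(lam t • A p) := by abel
    rw [h2, inner_neg_left, real_inner_smul_left]
    have hl0 : 0 < lam t := lt_of_lt_of_le ha hta
    nlinarith
  -- key1: nonexpansiveness of I - λ A with quantitative slack
  have key1 : ∀ t ∈ Set.Ioc (0 : ℝ) 1,
      ‖(x t - lam t • A (x t)) - (p - lam t • A p)‖ ^ 2
        ≤ ‖x t - p‖ ^ 2 - c * ‖A (x t) - A p‖ ^ 2 := by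
    intro t ht
    obtain ⟨hta, htb⟩ := hlam t ht
    have hAin := hA (x t) (hxQ t ht) p hpQ
    have heq : (x t - lam t • A (x t)) - (p - lam t • A p)
        = (x t - p) - lam t • (A (x t) - A p) := by
      rw [smul_sub]; abel
    rw [heq, aux_expand]
    have hcomm : ⟪x t - p, A (x t) - A p⟫ = ⟪A (x t) - A p, x t - p⟫ := real_inner_comm _ _
    rw [hcomm]
    nlinarith [sq_nonneg ‖A (x t) - A p‖,
      mul_nonneg (mul_nonneg (sub_nonneg.2 hta) (by linarith : (0:ℝ) ≤ 2 * ν - lam t))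
        (sq_nonneg ‖A (x t) - A p‖),
      mul_nonneg (mul_nonneg ha.le (sub_nonneg.2 htb)) (sq_nonneg ‖A (x t) - A p‖),
      mul_le_mul_of_nonneg_left hAin (by linarith : (0:ℝ) ≤ 2 * lam t)]
  -- z_t is closer to p than x_t
  have hznorm : ∀ t ∈ Set.Ioc (0 : ℝ) 1,
      ‖P (x t - lam t • A (x t)) - p‖ ≤ ‖x t - p‖ := by
    intro t ht
    have h1 : ‖P (x t - lam t • A (x t)) - p‖
        ≤ ‖(x t - lam t • A (x t)) - (p - lam t • A p)‖ := by
      have h := aux_nonexp Q P hPmem hP (x t - lam t • A (x t)) (p - lam t • A p)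
      rwa [hPfix t ht] at h
    have h2 := key1 t ht
    nlinarith [norm_nonneg (P (x t - lam t • A (x t)) - p), norm_nonneg (x t - p),
      norm_nonneg ((x t - lam t • A (x t)) - (p - lam t • A p)),
      mul_nonneg hc0.le (sq_nonneg ‖A (x t) - A p‖)]
  -- decomposition of x t - p
  have hsplit : ∀ t ∈ Set.Ioc (0 : ℝ) 1,
      ‖x t - p‖ ≤ t * ‖f (x t) - p‖ + (1 - t) * ‖S (P (x t - lam t • A (x t))) - p‖ := by
    intro t ht
    have hxe := hx t ht
    have hxdec : x t - p = t • (f (x t) - p) + (1 - t) • (S (P (x t - lam t • A (x t))) - p) := by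
      conv_lhs => rw [hxe]
      module
    rw [hxdec]
    refine (norm_add_le _ _).trans ?_
    rw [norm_smul, norm_smul, Real.norm_eq_abs, Real.norm_eq_abs,
      abs_of_pos ht.1, abs_of_nonneg (by linarith [ht.2] : (0:ℝ) ≤ 1 - t)]
  have hfF : ∀ t ∈ Set.Ioc (0 : ℝ) 1, ‖f (x t) - p‖ ≤ ρ * ‖x t - p‖ + D := by
    intro t ht
    have h0 : f (x t) - p = (f (x t) - f p) + (f p - p) := by abel
    rw [h0]
    refine (norm_add_le _ _).trans ?_
    have := hf (x t) (hxQ t ht) p hpQ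
    linarith
  have hSb : ∀ t ∈ Set.Ioc (0 : ℝ) 1,
      ‖S (P (x t - lam t • A (x t))) - p‖ ≤ ‖P (x t - lam t • A (x t)) - p‖ := by
    intro t ht
    have h1 := hS (P (x t - lam t • A (x t))) (hPmem _) p hpQ
    rwa [hSp] at h1
  -- boundedness: ‖x t - p‖ ≤ M
  have hxp : ∀ t ∈ Set.Ioc (0 : ℝ) 1, ‖x t - p‖ ≤ M := by
    intro t ht
    have h1 := hsplit t ht
    have h2 := hfF t ht
    have h3 := (hSb t ht).trans (hznorm t ht)
    have ht0 := ht.1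
    have hA1 : t * ‖f (x t) - p‖ ≤ t * (ρ * ‖x t - p‖ + D) :=
      mul_le_mul_of_nonneg_left h2 ht0.le
    have hA2 : (1 - t) * ‖S (P (x t - lam t • A (x t))) - p‖ ≤ (1 - t) * ‖x t - p‖ :=
      mul_le_mul_of_nonneg_left h3 (by linarith [ht.2])
    have h6 : t * ((1 - ρ) * ‖x t - p‖) ≤ t * D := by nlinarith
    have h5 : (1 - ρ) * ‖x t - p‖ ≤ D := le_of_mul_le_mul_left h6 ht0
    rw [hMdef, le_div_iff₀ h1ρ]
    linarith
  have hfE : ∀ t ∈ Set.Ioc (0 : ℝ) 1, ‖f (x t) - p‖ ≤ M + D := by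
    intro t ht
    have := hfF t ht
    have := hxp t ht
    nlinarith
  -- convexity estimate with square norms
  have hconv : ∀ t ∈ Set.Ioc (0 : ℝ) 1,
      ‖x t - p‖ ^ 2 ≤ t * (M + D) ^ 2
        + (1 - t) * ‖S (P (x t - lam t • A (x t))) - p‖ ^ 2 := by
    intro t ht
    have h1 := hsplit t ht
    have h2 := hfE t ht
    have hF0 : (0:ℝ) ≤ ‖f (x t) - p‖ := norm_nonneg _
    have hB0 : (0:ℝ) ≤ ‖S (P (x t - lam t • A (x t))) - p‖ := norm_nonneg _
    have ht0 := ht.1.le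
    have ht1 : (0:ℝ) ≤ 1 - t := by linarith [ht.2]
    have hr2 : ‖x t - p‖ ^ 2
        ≤ (t * ‖f (x t) - p‖ + (1 - t) * ‖S (P (x t - lam t • A (x t))) - p‖) ^ 2 :=
      pow_le_pow_left₀ (norm_nonneg _) h1 2
    have hc1 : (t * ‖f (x t) - p‖ + (1 - t) * ‖S (P (x t - lam t • A (x t))) - p‖) ^ 2
        ≤ t * ‖f (x t) - p‖ ^ 2 + (1 - t) * ‖S (P (x t - lam t • A (x t))) - p‖ ^ 2 := by
      nlinarith [mul_nonneg (mul_nonneg ht0 ht1)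
        (sq_nonneg (‖f (x t) - p‖ - ‖S (P (x t - lam t • A (x t))) - p‖))]
    have hc2 : ‖f (x t) - p‖ ^ 2 ≤ (M + D) ^ 2 := pow_le_pow_left₀ hF0 h2 2
    have hc3 : t * ‖f (x t) - p‖ ^ 2 ≤ t * (M + D) ^ 2 := mul_le_mul_of_nonneg_left hc2 ht0
    linarith
  -- bound on ‖A x_t - A p‖ for small t
  have hebound : ∀ t ∈ Set.Ioc (0 : ℝ) 1, t ≤ 1 / 2 →
      ‖A (x t) - A p‖ ^ 2 ≤ 2 * t * (M + D) ^ 2 / c := by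
    intro t ht ht2
    have h1 := hconv t ht
    have h2 := hSb t ht
    have hzp : ‖P (x t - lam t • A (x t)) - p‖ ^ 2
        ≤ ‖x t - p‖ ^ 2 - c * ‖A (x t) - A p‖ ^ 2 := by
      have h3 : ‖P (x t - lam t • A (x t)) - p‖
          ≤ ‖(x t - lam t • A (x t)) - (p - lam t • A p)‖ := by
        have h := aux_nonexp Q P hPmem hP (x t - lam t • A (x t)) (p - lam t • A p)
        rwa [hPfix t ht] at h
      have h4 := key1 t ht
      exact le_trans (pow_le_pow_left₀ (norm_nonneg _) h3 2) h4
    have hB2 : ‖S (P (x t - lam t • A (x t))) - p‖ ^ 2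
        ≤ ‖x t - p‖ ^ 2 - c * ‖A (x t) - A p‖ ^ 2 :=
      le_trans (pow_le_pow_left₀ (norm_nonneg _) h2 2) hzp
    have ht0 := ht.1
    have ht1 : (0:ℝ) ≤ 1 - t := by linarith [ht.2]
    have hm1 : (1 - t) * ‖S (P (x t - lam t • A (x t))) - p‖ ^ 2
        ≤ (1 - t) * (‖x t - p‖ ^ 2 - c * ‖A (x t) - A p‖ ^ 2) :=
      mul_le_mul_of_nonneg_left hB2 ht1
    have hm2 : 0 ≤ t * ‖x t - p‖ ^ 2 := mul_nonneg ht0.le (sq_nonneg _)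
    have hm3 : 0 ≤ (1 - 2 * t) * (c * ‖A (x t) - A p‖ ^ 2) :=
      mul_nonneg (by linarith) (mul_nonneg hc0.le (sq_nonneg _))
    rw [le_div_iff₀ hc0]
    linarith
  -- key3 : firm nonexpansiveness estimate
  have key3 : ∀ t ∈ Set.Ioc (0 : ℝ) 1,
      ‖x t - P (x t - lam t • A (x t))‖ ^ 2 ≤ t * (M + D) ^ 2
        + 2 * b * (‖x t - P (x t - lam t • A (x t))‖ * ‖A (x t) - A p‖) := by
    intro t ht
    obtain ⟨hta, htb⟩ := hlam t ht
    have hl0 : 0 < lam t := lt_of_lt_of_le ha hta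
    have hfirm := aux_firm Q P hPmem hP (x t - lam t • A (x t)) (p - lam t • A p)
    rw [hPfix t ht] at hfirm
    have hns := norm_sub_sq_real ((x t - lam t • A (x t)) - (p - lam t • A p))
      (P (x t - lam t • A (x t)) - p)
    have hwz : ((x t - lam t • A (x t)) - (p - lam t • A p))
          - (P (x t - lam t • A (x t)) - p)
        = (x t - P (x t - lam t • A (x t))) - lam t • (A (x t) - A p) := by
      rw [smul_sub]; abel
    rw [hwz, aux_expand] at hns
    have hCS := real_inner_le_norm (x t - P (x t - lam t • A (x t))) (A (x t) - A p)
    have hk1 := key1 t ht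
    have hXe0 : 0 ≤ ‖x t - P (x t - lam t • A (x t))‖ * ‖A (x t) - A p‖ :=
      mul_nonneg (norm_nonneg _) (norm_nonneg _)
    have hb1 : 2 * lam t * ⟪x t - P (x t - lam t • A (x t)), A (x t) - A p⟫
        ≤ 2 * lam t * (‖x t - P (x t - lam t • A (x t))‖ * ‖A (x t) - A p‖) :=
      mul_le_mul_of_nonneg_left hCS (by linarith)
    have hb2 : 2 * lam t * (‖x t - P (x t - lam t • A (x t))‖ * ‖A (x t) - A p‖)
        ≤ 2 * b * (‖x t - P (x t - lam t • A (x t))‖ * ‖A (x t) - A p‖) :=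
      mul_le_mul_of_nonneg_right (by linarith) hXe0
    have h1 := hconv t ht
    have hB1 : ‖S (P (x t - lam t • A (x t))) - p‖ ^ 2
        ≤ ‖P (x t - lam t • A (x t)) - p‖ ^ 2 :=
      pow_le_pow_left₀ (norm_nonneg _) (hSb t ht) 2
    have hm := mul_nonneg ht.1.le (sq_nonneg ‖S (P (x t - lam t • A (x t))) - p‖)
    have hm2 := mul_nonneg (sq_nonneg (lam t)) (sq_nonneg ‖A (x t) - A p‖)
    linarith [mul_nonneg hc0.le (sq_nonneg ‖A (x t) - A p‖)]
  -- final quantitative bound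
  have hfinal : ∀ t ∈ Set.Ioc (0 : ℝ) 1, t ≤ 1 / 2 →
      ‖x t - P (x t - lam t • A (x t))‖ ^ 2
        ≤ t * (M + D) ^ 2 + 4 * b * M * Real.sqrt (2 * t * (M + D) ^ 2 / c) := by
    intro t ht ht2
    have hk3 := key3 t ht
    have hX : ‖x t - P (x t - lam t • A (x t))‖ ≤ 2 * M := by
      have h1 := hxp t ht
      have h2 := hznorm t ht
      have h3 : x t - P (x t - lam t • A (x t))
          = (x t - p) + (p - P (x t - lam t • A (x t))) := by abel
      rw [h3]
      refine (norm_add_le _ _).trans ?_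
      have h4 : ‖p - P (x t - lam t • A (x t))‖ = ‖P (x t - lam t • A (x t)) - p‖ :=
        norm_sub_rev _ _
      linarith
    have he2 := hebound t ht ht2
    have he : ‖A (x t) - A p‖ ≤ Real.sqrt (2 * t * (M + D) ^ 2 / c) := by
      have h4 : ‖A (x t) - A p‖ = Real.sqrt (‖A (x t) - A p‖ ^ 2) :=
        (Real.sqrt_sq (norm_nonneg _)).symm
      rw [h4]
      exact Real.sqrt_le_sqrt he2
    have hs0 : 0 ≤ Real.sqrt (2 * t * (M + D) ^ 2 / c) := Real.sqrt_nonneg _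
    have hbb : 0 < b := ha.trans hab'
    have hm1 : ‖x t - P (x t - lam t • A (x t))‖ * ‖A (x t) - A p‖
        ≤ (2 * M) * Real.sqrt (2 * t * (M + D) ^ 2 / c) :=
      mul_le_mul hX he (norm_nonneg _) (by linarith)
    have hm2 : 2 * b * (‖x t - P (x t - lam t • A (x t))‖ * ‖A (x t) - A p‖)
        ≤ 2 * b * ((2 * M) * Real.sqrt (2 * t * (M + D) ^ 2 / c)) :=
      mul_le_mul_of_nonneg_left hm1 (by linarith)
    linarith
  -- limit of the bound
  have hcont : Continuous (fun t : ℝ =>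
      t * (M + D) ^ 2 + 4 * b * M * Real.sqrt (2 * t * (M + D) ^ 2 / c)) := by
    refine Continuous.add (continuous_id.mul continuous_const)
      (Continuous.mul continuous_const ?_)
    exact Real.continuous_sqrt.comp
      (((continuous_const.mul continuous_id).mul continuous_const).div_const c)
  have hphi0 : Filter.Tendsto (fun t : ℝ =>
      t * (M + D) ^ 2 + 4 * b * M * Real.sqrt (2 * t * (M + D) ^ 2 / c))
      (nhdsWithin 0 (Set.Ioi 0)) (nhds 0) := by
    have h := (hcont.tendsto 0).mono_left (nhdsWithin_le_nhds (s := Set.Ioi (0:ℝ)))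
    simpa using h
  have hsq : Filter.Tendsto (fun t => ‖x t - P (x t - lam t • A (x t))‖ ^ 2)
      (nhdsWithin 0 (Set.Ioi 0)) (nhds 0) := by
    refine squeeze_zero' ?_ ?_ hphi0
    · exact Filter.Eventually.of_forall fun t => sq_nonneg _
    · have hmem : Set.Ioc (0 : ℝ) (1 / 2) ∈ nhdsWithin 0 (Set.Ioi 0) :=
        Ioc_mem_nhdsGT_of_mem ⟨le_rfl, by norm_num⟩
      filter_upwards [hmem] with t ht
      exact hfinal t ⟨ht.1, by linarith [ht.2]⟩ ht.2
  have h2 := hsq.sqrt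
  have h3 := h2.congr fun t => Real.sqrt_sq (norm_nonneg _)
  simpa using h3
end

section
/- Let H be a real Hilbert space, Q ⊆ H a nonempty closed convex set, ν > 0, A : Q → H a ν-inverse strongly monotone operator, S : Q → Q a nonexpansive mapping, f : Q → Q a contraction with coefficient ρ ∈ [0,1), 0 < a < b < 2ν, and λ : (0,1] → [a,b]. Assume Ω = Fix(S) ∩ S_VI(A,Q) is nonempty, and for each t ∈ (0,1] let x_t ∈ Q be the unique point with x_t = t·f(x_t) + (1 − t)·S(P_Q(x_t − λ(t)·A x_t)). Then ‖x_t − S x_t‖ → 0 as t → 0⁺. -/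
open scoped RealInnerProductSpace

private lemma aux_sq_le {x y : ℝ} (hx : 0 ≤ x) (hy : 0 ≤ y) (h : x ^ 2 ≤ y ^ 2) : x ≤ y := by
  nlinarith

private lemma aux1 {c d : ℝ} (hc : 0 ≤ c) (hd : 0 ≤ d) (h : d ^ 2 ≤ c * d) : d ≤ c := by
  nlinarith

private lemma aux2 {l ν W I R : ℝ} (hl : 0 ≤ l) (h : ν * W ≤ I) :
    R - 2 * (l * I) + l ^ 2 * W ≤ R - l * (2 * ν - l) * W := by
  nlinarith [mul_le_mul_of_nonneg_left h hl]

private lemma aux3 {r s t F M : ℝ} (hr : 0 ≤ r) (hs : 0 ≤ s) (hF : 0 ≤ F) (hM : 0 ≤ M)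
    (ht0 : 0 < t) (ht1 : t ≤ 1) (hsM : s ≤ M) (h : r ≤ t * F + s) :
    r ^ 2 - s ^ 2 ≤ t * (2 * F * M + F ^ 2) := by
  nlinarith [mul_self_le_mul_self hr h,
    mul_le_mul_of_nonneg_left hsM (mul_nonneg (mul_nonneg (by norm_num : (0:ℝ) ≤ 2) ht0.le) hF),
    mul_le_mul_of_nonneg_right (mul_le_mul_of_nonneg_left ht1 ht0.le) (sq_nonneg F)]

private lemma aux4 {a b l ν : ℝ} (ha : 0 < a) (hla : a ≤ l) (hlb : l ≤ b) (hb : b < 2 * ν) :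
    a * (2 * ν - b) ≤ l * (2 * ν - l) := by
  nlinarith [mul_nonneg (by linarith : (0:ℝ) ≤ l - a) (by linarith : (0:ℝ) ≤ 2 * ν - b),
    mul_nonneg (by linarith : (0:ℝ) ≤ l) (by linarith : (0:ℝ) ≤ b - l)]

set_option maxHeartbeats 1000000 in
/-- `‖x_t - S x_t‖ → 0` as `t → 0⁺`. -/
theorem stmt_11 {H : Type*} [NormedAddCommGroup H] [InnerProductSpace ℝ H] [CompleteSpace H]
    (Q : Set H) (hQne : Q.Nonempty) (hQclosed : IsClosed Q) (hQconvex : Convex ℝ Q)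
    (ν : ℝ) (hν : 0 < ν)
    (A : H → H) (hA : ∀ x ∈ Q, ∀ y ∈ Q, ν * ‖A x - A y‖ ^ 2 ≤ ⟪A x - A y, x - y⟫)
    (P : H → H) (hPmem : ∀ x, P x ∈ Q)
    (hP : ∀ (x : H), ∀ y ∈ Q, ⟪x - P x, y - P x⟫ ≤ 0)
    (S : H → H) (hSmem : ∀ x ∈ Q, S x ∈ Q)
    (hS : ∀ x ∈ Q, ∀ y ∈ Q, ‖S x - S y‖ ≤ ‖x - y‖)
    (ρ : ℝ) (hρ : ρ ∈ Set.Ico (0 : ℝ) 1)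
    (f : H → H) (hfmem : ∀ x ∈ Q, f x ∈ Q)
    (hf : ∀ x ∈ Q, ∀ y ∈ Q, ‖f x - f y‖ ≤ ρ * ‖x - y‖)
    (a b : ℝ) (hab : 0 < a ∧ a < b ∧ b < 2 * ν)
    (lam : ℝ → ℝ) (hlam : ∀ t ∈ Set.Ioc (0 : ℝ) 1, lam t ∈ Set.Icc a b)
    (Ω : Set H)
    (hΩ : Ω = {x : H | x ∈ Q ∧ S x = x} ∩ {q : H | q ∈ Q ∧ ∀ x ∈ Q, 0 ≤ ⟪A q, x - q⟫})
    (hΩne : Ω.Nonempty)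
    (x : ℝ → H) (hxQ : ∀ t ∈ Set.Ioc (0 : ℝ) 1, x t ∈ Q)
    (hx : ∀ t ∈ Set.Ioc (0 : ℝ) 1,
      x t = t • f (x t) + (1 - t) • S (P (x t - lam t • A (x t)))) :
    Filter.Tendsto (fun t => ‖x t - S (x t)‖)
      (nhdsWithin 0 (Set.Ioi (0 : ℝ))) (nhds 0) := by
  obtain ⟨p, hpmem⟩ := hΩne
  rw [hΩ] at hpmem
  obtain ⟨⟨hpQ, hSp⟩, -, hpVI⟩ := hpmem
  obtain ⟨hρ0, hρ1⟩ := hρ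
  obtain ⟨ha, hab', hb⟩ := hab
  have hν2b : 0 < 2 * ν - b := by linarith
  have hb0 : 0 < b := by linarith
  have h1ρ : 0 < 1 - ρ := by linarith
  set c : ℝ := ‖f p - p‖ with hcdef
  have hc0 : 0 ≤ c := norm_nonneg _
  set M : ℝ := c / (1 - ρ) with hMdef
  have hM0 : 0 ≤ M := div_nonneg hc0 h1ρ.le
  set F : ℝ := ρ * M + c with hFdef
  have hF0 : 0 ≤ F := by rw [hFdef]; exact add_nonneg (mul_nonneg hρ0 hM0) hc0
  set C1 : ℝ := 2 * F * M + F ^ 2 with hC1def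
  have hC10 : 0 ≤ C1 := by
    rw [hC1def]
    exact add_nonneg (mul_nonneg (mul_nonneg (by norm_num) hF0) hM0) (sq_nonneg F)
  set C2 : ℝ := 4 * b * M with hC2def
  have hC20 : 0 ≤ C2 := by
    rw [hC2def]
    exact mul_nonneg (mul_nonneg (by norm_num) hb0.le) hM0
  have hD : 0 < a * (2 * ν - b) := mul_pos ha hν2b
  set C3 : ℝ := C1 / (a * (2 * ν - b)) with hC3def
  have hC30 : 0 ≤ C3 := by rw [hC3def]; exact div_nonneg hC10 hD.le
  clear_value c M F C1 C2 C3
  -- firm nonexpansiveness of P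
  have firm : ∀ u v, ‖P u - P v‖ ^ 2 ≤ ⟪u - v, P u - P v⟫ := by
    intro u v
    have h1 := hP u (P v) (hPmem v)
    have h2 := hP v (P u) (hPmem u)
    have e1 : ⟪u - v, P u - P v⟫ - ‖P u - P v‖ ^ 2
        = -⟪u - P u, P v - P u⟫ - ⟪v - P v, P u - P v⟫ := by
      rw [← real_inner_self_eq_norm_sq]
      simp only [inner_sub_left, inner_sub_right]
      ring
    linarith
  have Pnonexp : ∀ u v, ‖P u - P v‖ ≤ ‖u - v‖ := by
    intro u v
    have h := firm u v
    have hcs := real_inner_le_norm (u - v) (P u - P v)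
    exact aux1 (norm_nonneg _) (norm_nonneg _) (h.trans hcs)
  -- p is a fixed point of the projected gradient map
  have pfix : ∀ l : ℝ, 0 < l → P (p - l • A p) = p := by
    intro l hl
    have hq := hP (p - l • A p) p hpQ
    have hVI := hpVI (P (p - l • A p)) (hPmem _)
    have e : ⟪(p - l • A p) - P (p - l • A p), p - P (p - l • A p)⟫
        = ‖p - P (p - l • A p)‖ ^ 2 + l * ⟪A p, P (p - l • A p) - p⟫ := by
      rw [← real_inner_self_eq_norm_sq]
      simp only [inner_sub_left, inner_sub_right, real_inner_smul_left, real_inner_smul_right]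
      ring
    have key : ‖p - P (p - l • A p)‖ ^ 2 ≤ 0 := by linarith [mul_nonneg hl.le hVI]
    have hsq : ‖p - P (p - l • A p)‖ ^ 2 = 0 := le_antisymm key (sq_nonneg _)
    have hn : ‖p - P (p - l • A p)‖ = 0 := pow_eq_zero_iff two_ne_zero |>.mp hsq
    have := norm_eq_zero.mp hn
    have := sub_eq_zero.mp this
    exact this.symm
  -- the main pointwise estimate
  have key : ∀ t ∈ Set.Ioc (0:ℝ) 1,
      ‖x t - S (x t)‖ ≤ t * (F + M) + Real.sqrt (t * C1 + C2 * Real.sqrt (t * C3)) := by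
    intro t ht
    obtain ⟨ht0, ht1⟩ := ht
    have hxt : x t ∈ Q := hxQ t ⟨ht0, ht1⟩
    have hxeq := hx t ⟨ht0, ht1⟩
    set l : ℝ := lam t with hldef
    obtain ⟨hla, hlb⟩ := hlam t ⟨ht0, ht1⟩
    rw [← hldef] at hla hlb
    have hl0 : 0 < l := lt_of_lt_of_le ha hla
    set u : H := x t - l • A (x t) with hudef
    set y : H := P u with hydef
    have hyQ : y ∈ Q := hPmem u
    set v : H := p - l • A p with hvdef
    set w : H := A (x t) - A p with hwdef
    have hw0 : 0 ≤ ‖w‖ := norm_nonneg w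
    have hPv : P v = p := pfix l hl0
    have hism : ν * ‖w‖ ^ 2 ≤ ⟪w, x t - p⟫ := hA (x t) hxt p hpQ
    have huv : u - v = (x t - p) - l • w := by
      rw [hudef, hvdef, hwdef, smul_sub]; abel
    clear_value l u y v w
    have huvsq : ‖u - v‖ ^ 2 ≤ ‖x t - p‖ ^ 2 - l * (2 * ν - l) * ‖w‖ ^ 2 := by
      rw [huv, norm_sub_sq_real, real_inner_smul_right, norm_smul, Real.norm_eq_abs,
        abs_of_pos hl0, mul_pow, real_inner_comm]
      exact aux2 hl0.le hism
    have hyp_le : ‖y - p‖ ≤ ‖u - v‖ := by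
      rw [hydef, ← hPv]; exact Pnonexp u v
    have hyple2 : ‖y - p‖ ≤ ‖x t - p‖ := by
      have hpos : 0 ≤ l * (2 * ν - l) * ‖w‖ ^ 2 :=
        mul_nonneg (mul_nonneg hl0.le (by linarith)) (sq_nonneg _)
      have h2 : ‖u - v‖ ^ 2 ≤ ‖x t - p‖ ^ 2 := by linarith
      exact hyp_le.trans (aux_sq_le (norm_nonneg _) (norm_nonneg _) h2)
    have hfx : ‖f (x t) - p‖ ≤ ρ * ‖x t - p‖ + c := by
      have e2 : f (x t) - p = (f (x t) - f p) + (f p - p) := by abel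
      have h3 := hf (x t) hxt p hpQ
      calc ‖f (x t) - p‖ ≤ ‖f (x t) - f p‖ + ‖f p - p‖ := by rw [e2]; exact norm_add_le _ _
        _ ≤ ρ * ‖x t - p‖ + c := by rw [hcdef]; linarith
    have hSyp : ‖S y - p‖ ≤ ‖y - p‖ := by
      have h4 := hS y hyQ p hpQ
      rwa [hSp] at h4
    have hdecomp : x t - p = t • (f (x t) - p) + (1 - t) • (S y - p) := by
      conv_lhs => rw [hxeq]
      module
    have hnormsum : ‖x t - p‖ ≤ t * ‖f (x t) - p‖ + (1 - t) * ‖S y - p‖ := by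
      rw [hdecomp]
      refine le_trans (norm_add_le _ _) ?_
      rw [norm_smul, norm_smul, Real.norm_eq_abs, Real.norm_eq_abs, abs_of_pos ht0,
        abs_of_nonneg (by linarith : (0:ℝ) ≤ 1 - t)]
    have hbd : ‖x t - p‖ ≤ M := by
      have h5 : ‖x t - p‖ ≤ t * (ρ * ‖x t - p‖ + c) + (1 - t) * ‖x t - p‖ := by
        have hh1 := mul_le_mul_of_nonneg_left hfx ht0.le
        have hh2 := mul_le_mul_of_nonneg_left (hSyp.trans hyple2)
          (by linarith : (0:ℝ) ≤ 1 - t)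
        linarith
      have h6 : t * ((1 - ρ) * ‖x t - p‖) ≤ t * c := by linarith
      have h7 : (1 - ρ) * ‖x t - p‖ ≤ c := le_of_mul_le_mul_left h6 ht0
      rw [hMdef, le_div_iff₀ h1ρ]
      linarith
    have hyM : ‖y - p‖ ≤ M := hyple2.trans hbd
    have hfxF : ‖f (x t) - p‖ ≤ F := by
      rw [hFdef]
      have := mul_le_mul_of_nonneg_left hbd hρ0
      linarith
    have hSyM : ‖S y - p‖ ≤ M := hSyp.trans hyM
    have hxy2M : ‖x t - y‖ ≤ 2 * M := by
      have e4 : x t - y = (x t - p) + (p - y) := by abel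
      have h8 : ‖x t - y‖ ≤ ‖x t - p‖ + ‖p - y‖ := by rw [e4]; exact norm_add_le _ _
      rw [norm_sub_rev p y] at h8
      linarith
    have hxSy : ‖x t - S y‖ ≤ t * (F + M) := by
      have e5 : x t - S y = t • (f (x t) - S y) := by
        conv_lhs => rw [hxeq]
        module
      rw [e5, norm_smul, Real.norm_eq_abs, abs_of_pos ht0]
      have h9 : ‖f (x t) - S y‖ ≤ F + M := by
        have e6 : f (x t) - S y = (f (x t) - p) + (p - S y) := by abel
        have h10 : ‖f (x t) - S y‖ ≤ ‖f (x t) - p‖ + ‖p - S y‖ := by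
          rw [e6]; exact norm_add_le _ _
        rw [norm_sub_rev p (S y)] at h10
        linarith
      exact mul_le_mul_of_nonneg_left h9 ht0.le
    have hrs : ‖x t - p‖ ^ 2 - ‖y - p‖ ^ 2 ≤ t * C1 := by
      have h11 : ‖x t - p‖ ≤ t * F + ‖y - p‖ := by
        have hh1 := mul_le_mul_of_nonneg_left hfxF ht0.le
        have hh2 : (1 - t) * ‖S y - p‖ ≤ 1 * ‖S y - p‖ :=
          mul_le_mul_of_nonneg_right (by linarith) (norm_nonneg _)
        linarith
      rw [hC1def]
      exact aux3 (norm_nonneg _) (norm_nonneg _) hF0 hM0 ht0 ht1 hyM h11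
    have hAsq : ‖w‖ ^ 2 ≤ t * C3 := by
      have h12 : ‖y - p‖ ^ 2 ≤ ‖u - v‖ ^ 2 := pow_le_pow_left₀ (norm_nonneg _) hyp_le 2
      have h13 : a * (2 * ν - b) ≤ l * (2 * ν - l) := aux4 ha hla hlb hb
      have h14 : a * (2 * ν - b) * ‖w‖ ^ 2 ≤ ‖x t - p‖ ^ 2 - ‖y - p‖ ^ 2 := by
        have := mul_le_mul_of_nonneg_right h13 (sq_nonneg ‖w‖)
        linarith [huvsq, h12, this]
      have h15 : ‖w‖ ^ 2 * (a * (2 * ν - b)) ≤ t * C1 := by linarith [h14, hrs]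
      calc ‖w‖ ^ 2 ≤ t * C1 / (a * (2 * ν - b)) := (le_div_iff₀ hD).mpr h15
        _ = t * C3 := by rw [hC3def, mul_div_assoc]
    have hfirm : ‖y - p‖ ^ 2 ≤ ⟪u - v, y - p⟫ := by
      have h16 := firm u v
      rwa [hPv, ← hydef] at h16
    have hz : ‖(u - v) - (y - p)‖ ^ 2 ≤ ‖u - v‖ ^ 2 - ‖y - p‖ ^ 2 := by
      have e7 := norm_sub_sq_real (u - v) (y - p)
      linarith
    have hzeq : (u - v) - (y - p) = (x t - y) - l • w := by
      rw [huv]; abel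
    have hzlow : ‖x t - y‖ ^ 2 - 2 * l * (‖x t - y‖ * ‖w‖) ≤ ‖(u - v) - (y - p)‖ ^ 2 := by
      rw [hzeq]
      have e9 : ‖(x t - y) - l • w‖ ^ 2
          = ‖x t - y‖ ^ 2 - 2 * (l * ⟪x t - y, w⟫) + l ^ 2 * ‖w‖ ^ 2 := by
        rw [norm_sub_sq_real, real_inner_smul_right, norm_smul, Real.norm_eq_abs,
          abs_of_pos hl0, mul_pow]
      rw [e9]
      have hCS := mul_le_mul_of_nonneg_left (real_inner_le_norm (x t - y) w)
        (by linarith : (0:ℝ) ≤ 2 * l)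
      linarith [sq_nonneg (l * ‖w‖), hCS]
    have hxysq : ‖x t - y‖ ^ 2 ≤ t * C1 + C2 * ‖w‖ := by
      have h10 : ‖u - v‖ ^ 2 ≤ ‖x t - p‖ ^ 2 := by
        have := mul_nonneg (mul_nonneg hl0.le (by linarith : (0:ℝ) ≤ 2 * ν - l))
          (sq_nonneg ‖w‖)
        linarith
      have h11 : 2 * l * (‖x t - y‖ * ‖w‖) ≤ C2 * ‖w‖ := by
        rw [hC2def]
        have := mul_le_mul_of_nonneg_right
          (mul_le_mul hlb hxy2M (norm_nonneg _) hb0.le) hw0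
        linarith [this]
      linarith [hz, hzlow, h10, hrs, h11]
    have hwle : ‖w‖ ≤ Real.sqrt (t * C3) := by
      rw [show ‖w‖ = Real.sqrt (‖w‖ ^ 2) from (Real.sqrt_sq hw0).symm]
      exact Real.sqrt_le_sqrt hAsq
    have hxyle : ‖x t - y‖ ≤ Real.sqrt (t * C1 + C2 * Real.sqrt (t * C3)) := by
      rw [show ‖x t - y‖ = Real.sqrt (‖x t - y‖ ^ 2) from (Real.sqrt_sq (norm_nonneg _)).symm]
      refine Real.sqrt_le_sqrt ?_
      have h17 : C2 * ‖w‖ ≤ C2 * Real.sqrt (t * C3) := mul_le_mul_of_nonneg_left hwle hC20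
      linarith
    have hSxy : ‖S y - S (x t)‖ ≤ ‖y - x t‖ := hS y hyQ (x t) hxt
    have e8 : x t - S (x t) = (x t - S y) + (S y - S (x t)) := by abel
    calc ‖x t - S (x t)‖ ≤ ‖x t - S y‖ + ‖S y - S (x t)‖ := by
          rw [e8]; exact norm_add_le _ _
      _ ≤ t * (F + M) + Real.sqrt (t * C1 + C2 * Real.sqrt (t * C3)) := by
          refine add_le_add hxSy (hSxy.trans ?_)
          rw [norm_sub_rev]
          exact hxyle
  -- conclude by squeezing
  have hg : Filter.Tendsto
      (fun t : ℝ => t * (F + M) + Real.sqrt (t * C1 + C2 * Real.sqrt (t * C3)))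
      (nhdsWithin 0 (Set.Ioi (0:ℝ))) (nhds 0) := by
    have hcont : Continuous
        (fun t : ℝ => t * (F + M) + Real.sqrt (t * C1 + C2 * Real.sqrt (t * C3))) := by
      fun_prop
    have h0 := hcont.tendsto 0
    simp only [zero_mul, mul_zero, Real.sqrt_zero, add_zero, zero_add] at h0
    exact h0.mono_left nhdsWithin_le_nhds
  refine squeeze_zero' ?_ ?_ hg
  · filter_upwards with t using norm_nonneg _
  · filter_upwards [Ioc_mem_nhdsGT_of_mem (Set.left_mem_Ico.mpr one_pos)] with t ht
    exact key t ht
end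

section
/- Let H be a real Hilbert space, Q ⊆ H a nonempty closed convex set, ν > 0, A : Q → H a ν-inverse strongly monotone operator, S : Q → Q a nonexpansive mapping, f : Q → Q a contraction with coefficient ρ ∈ [0,1), 0 < a < b < 2ν, and λ : (0,1] → [a,b]. Assume Ω = Fix(S) ∩ S_VI(A,Q) is nonempty, let q* be the unique solution of the variational problem (q* ∈ Ω and ⟨f(q*) − q*, x − q*⟩ ≤ 0 for all x ∈ Ω), and for each t ∈ (0,1] let x_t ∈ Q be the unique point with x_t = t·f(x_t) + (1 − t)·S(P_Q(x_t − λ(t)·A x_t)). Then limsup_{t→0⁺} ⟨f(q*) − q*, x_t − q*⟩ ≤ 0. -/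
open scoped RealInnerProductSpace
open Filter Topology

/-- Ultrafilter limit of an eventually bounded real function. -/
lemma ult_lim {α : Type*} (U : Ultrafilter α) (g : α → ℝ) (lo hi : ℝ)
    (h : ∀ᶠ t in (U : Filter α), g t ∈ Set.Icc lo hi) :
    ∃ L ∈ Set.Icc lo hi, Filter.Tendsto g U (𝓝 L) := by
  have hle : (U.map g : Filter ℝ) ≤ Filter.principal (Set.Icc lo hi) := by
    rw [Filter.le_principal_iff]
    exact Filter.mem_map.2 h
  obtain ⟨L, hL, hle2⟩ := (isCompact_Icc).ultrafilter_le_nhds (U.map g) hle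
  exact ⟨L, hL, hle2⟩

section proj

variable {H : Type*} [NormedAddCommGroup H] [InnerProductSpace ℝ H]
variable {Q : Set H} {P : H → H}

/-- Firm nonexpansiveness of the projection. -/
lemma P_firm (hPmem : ∀ x, P x ∈ Q) (hP : ∀ (x : H), ∀ y ∈ Q, ⟪x - P x, y - P x⟫ ≤ 0)
    (u v : H) : ‖P u - P v‖ ^ 2 ≤ ⟪u - v, P u - P v⟫ := by
  have h1 := hP u (P v) (hPmem v)
  have h2 := hP v (P u) (hPmem u)
  have key : ⟪u - P u, P v - P u⟫ + ⟪v - P v, P u - P v⟫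
      = ‖P u - P v‖ ^ 2 - ⟪u - v, P u - P v⟫ := by
    simp only [inner_sub_left, inner_sub_right, ← real_inner_self_eq_norm_sq]
    linarith [real_inner_comm u v, real_inner_comm u (P u), real_inner_comm u (P v),
      real_inner_comm v (P u), real_inner_comm v (P v), real_inner_comm (P u) (P v)]
  nlinarith [key]

lemma P_nonexp (hPmem : ∀ x, P x ∈ Q) (hP : ∀ (x : H), ∀ y ∈ Q, ⟪x - P x, y - P x⟫ ≤ 0)
    (u v : H) : ‖P u - P v‖ ≤ ‖u - v‖ := by
  have h1 := P_firm hPmem hP u v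
  have h2 := real_inner_le_norm (u - v) (P u - P v)
  nlinarith [norm_nonneg (P u - P v), norm_nonneg (u - v)]

/-- Characterization of the projection. -/
lemma P_char (hPmem : ∀ x, P x ∈ Q) (hP : ∀ (x : H), ∀ y ∈ Q, ⟪x - P x, y - P x⟫ ≤ 0)
    (u z : H) (hz : z ∈ Q) (hchar : ∀ y ∈ Q, ⟪u - z, y - z⟫ ≤ 0) : P u = z := by
  have h1 := hP u z hz
  have h2 := hchar (P u) (hPmem u)
  have key : ⟪u - P u, z - P u⟫ + ⟪u - z, P u - z⟫ = ‖z - P u‖ ^ 2 := by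
    simp only [inner_sub_left, inner_sub_right, ← real_inner_self_eq_norm_sq]
    linarith [real_inner_comm u z, real_inner_comm u (P u), real_inner_comm z (P u)]
  have h3 : ‖z - P u‖ ^ 2 ≤ 0 := by linarith
  have h4 : z - P u = 0 := by
    have := norm_nonneg (z - P u)
    have hn : ‖z - P u‖ = 0 := by nlinarith
    exact norm_eq_zero.1 hn
  rw [eq_comm, ← sub_eq_zero]
  simpa using h4

end proj
open scoped RealInnerProductSpace
open Filter Topology

section ism
variable {H : Type*} [NormedAddCommGroup H] [InnerProductSpace ℝ H]

/-- the `I - λA` contraction estimate for `ν`-ism `A`. -/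
lemma ism_est {Q : Set H} {A : H → H} {ν : ℝ}
    (hA : ∀ x ∈ Q, ∀ y ∈ Q, ν * ‖A x - A y‖ ^ 2 ≤ ⟪A x - A y, x - y⟫)
    {x y : H} (hx : x ∈ Q) (hy : y ∈ Q) {lam : ℝ} (hl : 0 ≤ lam) :
    ‖(x - lam • A x) - (y - lam • A y)‖ ^ 2
      ≤ ‖x - y‖ ^ 2 - lam * (2 * ν - lam) * ‖A x - A y‖ ^ 2 := by
  have e : (x - lam • A x) - (y - lam • A y) = (x - y) - lam • (A x - A y) := by module
  rw [e, norm_sub_sq_real, real_inner_smul_right, norm_smul]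
  have hAxy := hA x hx y hy
  rw [real_inner_comm] at hAxy
  have habs : |lam| = lam := abs_of_nonneg hl
  rw [Real.norm_eq_abs, habs]
  nlinarith [mul_nonneg hl (sub_nonneg.2 hAxy), sq_nonneg ‖A x - A y‖]
end ism

section weak
variable {H : Type*} [NormedAddCommGroup H] [InnerProductSpace ℝ H] [CompleteSpace H]
variable {α : Type*}

/-- weak ultrafilter limit of a bounded family in Hilbert space. -/
lemma weak_lim (U : Ultrafilter α) (x : α → H) (B : ℝ)
    (hb : ∀ᶠ t in (U : Filter α), ‖x t‖ ≤ B) :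
    ∃ ω : H, ∀ y : H, Filter.Tendsto (fun t => ⟪y, x t⟫) U (𝓝 ⟪y, ω⟫) := by
  have hB0 : 0 ≤ B := by
    obtain ⟨t, ht⟩ := hb.exists
    exact le_trans (norm_nonneg _) ht
  have hbdd : ∀ y : H, ∀ᶠ t in (U : Filter α),
      ⟪y, x t⟫ ∈ Set.Icc (-(‖y‖ * B)) (‖y‖ * B) := by
    intro y
    filter_upwards [hb] with t ht
    have h1 : |⟪y, x t⟫| ≤ ‖y‖ * ‖x t‖ := abs_real_inner_le_norm y (x t)
    have h2 : ‖y‖ * ‖x t‖ ≤ ‖y‖ * B := by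
      exact mul_le_mul_of_nonneg_left ht (norm_nonneg y)
    constructor <;> [linarith [neg_abs_le ⟪y, x t⟫]; linarith [le_abs_self ⟪y, x t⟫]]
  choose ℓ hmem hℓ using fun y => ult_lim U (fun t => ⟪y, x t⟫) _ _ (hbdd y)
  have hadd : ∀ y z : H, ℓ (y + z) = ℓ y + ℓ z := by
    intro y z
    refine tendsto_nhds_unique (hℓ (y + z)) ?_
    have := (hℓ y).add (hℓ z)
    convert this using 1
    funext t; simp [inner_add_left]
  have hsmul : ∀ (r : ℝ) (y : H), ℓ (r • y) = r * ℓ y := by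
    intro r y
    refine tendsto_nhds_unique (hℓ (r • y)) ?_
    have := (hℓ y).const_mul r
    convert this using 1
    funext t; simp [real_inner_smul_left]
  have hbound : ∀ y : H, ‖ℓ y‖ ≤ B * ‖y‖ := by
    intro y
    obtain ⟨h1, h2⟩ := hmem y
    rw [Real.norm_eq_abs, abs_le]
    constructor <;> [linarith [h1, mul_comm ‖y‖ B]; linarith [h2, mul_comm ‖y‖ B]]
  let Lmap : H →ₗ[ℝ] ℝ :=
    { toFun := ℓ, map_add' := hadd, map_smul' := hsmul }
  let Lc : H →L[ℝ] ℝ := LinearMap.mkContinuous Lmap B hbound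
  refine ⟨(InnerProductSpace.toDual ℝ H).symm Lc, fun y => ?_⟩
  have : ⟪y, (InnerProductSpace.toDual ℝ H).symm Lc⟫ = ℓ y := by
    rw [real_inner_comm]
    exact InnerProductSpace.toDual_symm_apply
  rw [this]; exact hℓ y

/-- the weak limit of points of a closed convex set lies in the set. -/
lemma weak_mem (Q : Set H) (hc : IsClosed Q) (hconv : Convex ℝ Q)
    (U : Ultrafilter α) (x : α → H) (hx : ∀ᶠ t in (U : Filter α), x t ∈ Q)
    (ω : H) (hω : ∀ y : H, Filter.Tendsto (fun t => ⟪y, x t⟫) U (𝓝 ⟪y, ω⟫)) : ω ∈ Q := by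
  by_contra h
  obtain ⟨g, u, hgu, hQu⟩ := geometric_hahn_banach_point_closed hconv hc h
  set yg := (InnerProductSpace.toDual ℝ H).symm g with hyg
  have hrep : ∀ z : H, ⟪yg, z⟫ = g z := fun z => InnerProductSpace.toDual_symm_apply
  have htend : Filter.Tendsto (fun t => g (x t)) U (𝓝 (g ω)) := by
    have := hω yg
    simpa only [hrep] using this
  have hev : ∀ᶠ t in (U : Filter α), u ≤ g (x t) := by
    filter_upwards [hx] with t ht
    exact le_of_lt (hQu _ ht)
  have : u ≤ g ω := ge_of_tendsto htend hev
  linarith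
end weak

set_option maxHeartbeats 1000000



open scoped RealInnerProductSpace

/-- `limsup_{t→0⁺} ⟪f(q*) - q*, x_t - q*⟫ ≤ 0`, where `q*` is the unique solution of (VP). -/
theorem stmt_12 {H : Type*} [NormedAddCommGroup H] [InnerProductSpace ℝ H] [CompleteSpace H]
    (Q : Set H) (hQne : Q.Nonempty) (hQclosed : IsClosed Q) (hQconvex : Convex ℝ Q)
    (ν : ℝ) (hν : 0 < ν)
    (A : H → H) (hA : ∀ x ∈ Q, ∀ y ∈ Q, ν * ‖A x - A y‖ ^ 2 ≤ ⟪A x - A y, x - y⟫)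
    (P : H → H) (hPmem : ∀ x, P x ∈ Q)
    (hP : ∀ (x : H), ∀ y ∈ Q, ⟪x - P x, y - P x⟫ ≤ 0)
    (S : H → H) (hSmem : ∀ x ∈ Q, S x ∈ Q)
    (hS : ∀ x ∈ Q, ∀ y ∈ Q, ‖S x - S y‖ ≤ ‖x - y‖)
    (ρ : ℝ) (hρ : ρ ∈ Set.Ico (0 : ℝ) 1)
    (f : H → H) (hfmem : ∀ x ∈ Q, f x ∈ Q)
    (hf : ∀ x ∈ Q, ∀ y ∈ Q, ‖f x - f y‖ ≤ ρ * ‖x - y‖)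
    (a b : ℝ) (hab : 0 < a ∧ a < b ∧ b < 2 * ν)
    (lam : ℝ → ℝ) (hlam : ∀ t ∈ Set.Ioc (0 : ℝ) 1, lam t ∈ Set.Icc a b)
    (Ω : Set H)
    (hΩ : Ω = {x : H | x ∈ Q ∧ S x = x} ∩ {q : H | q ∈ Q ∧ ∀ x ∈ Q, 0 ≤ ⟪A q, x - q⟫})
    (hΩne : Ω.Nonempty)
    (x : ℝ → H) (hxQ : ∀ t ∈ Set.Ioc (0 : ℝ) 1, x t ∈ Q)
    (hx : ∀ t ∈ Set.Ioc (0 : ℝ) 1,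
      x t = t • f (x t) + (1 - t) • S (P (x t - lam t • A (x t))))
    (qstar : H) (hqstar : qstar ∈ Ω)
    (hqstarVI : ∀ y ∈ Ω, ⟪f qstar - qstar, y - qstar⟫ ≤ 0) :
    Filter.limsup (fun t => ⟪f qstar - qstar, x t - qstar⟫)
      (nhdsWithin 0 (Set.Ioi (0 : ℝ))) ≤ 0 := by
  obtain ⟨hρ0, hρ1⟩ := hρ
  obtain ⟨ha, hab', hb2ν⟩ := hab
  have hqΩ := hqstar
  rw [hΩ] at hqΩ
  obtain ⟨⟨hqQ, hqS⟩, -, hqVI⟩ := hqΩ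
  set c := f qstar - qstar with hc
  have hρpos : 0 < 1 - ρ := by linarith
  set M := ‖c‖ / (1 - ρ) with hM
  have hMc : ‖c‖ = M * (1 - ρ) := by rw [hM, div_mul_cancel₀ _ (ne_of_gt hρpos)]
  have hM0 : 0 ≤ M := div_nonneg (norm_nonneg _) (le_of_lt hρpos)
  -- the projection fixes qstar shifted by any multiple of A qstar
  have hPq : ∀ l : ℝ, 0 ≤ l → P (qstar - l • A qstar) = qstar := by
    intro l hl
    apply P_char hPmem hP _ _ hqQ
    intro y hy
    have h1 := hqVI y hy
    have e : qstar - l • A qstar - qstar = (-l) • A qstar := by module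
    rw [e, real_inner_smul_left]
    exact mul_nonpos_of_nonpos_of_nonneg (by linarith) h1
  -- fundamental bound
  have hbound : ∀ t ∈ Set.Ioc (0:ℝ) 1,
      ((1 - ρ) * ‖x t - qstar‖^2 ≤ ⟪c, x t - qstar⟫) ∧ ‖x t - qstar‖ ≤ M ∧
      ‖S (P (x t - lam t • A (x t))) - qstar‖ ≤ ‖x t - qstar‖ := by
    intro t ht
    obtain ⟨ht0, ht1⟩ := ht
    have hxt := hx t ⟨ht0, ht1⟩
    set w := P (x t - lam t • A (x t)) with hwdef
    set y := S w with hydef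
    have hxtQ := hxQ t ⟨ht0, ht1⟩
    have hlam' := hlam t ⟨ht0, ht1⟩
    have hl0 : 0 ≤ lam t := le_trans (le_of_lt ha) hlam'.1
    have hwQ : w ∈ Q := hPmem _
    have hyQ : y ∈ Q := hSmem _ hwQ
    have h1 : ‖w - qstar‖ ≤ ‖x t - qstar‖ := by
      have hPqe := hPq (lam t) hl0
      have h2 : ‖w - qstar‖ ≤ ‖(x t - lam t • A (x t)) - (qstar - lam t • A qstar)‖ := by
        conv_lhs => rw [hwdef, ← hPqe]
        exact P_nonexp hPmem hP _ _
      have h3 := ism_est hA hxtQ hqQ hl0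
      have h4 : 0 ≤ lam t * (2*ν - lam t) * ‖A (x t) - A qstar‖^2 :=
        mul_nonneg (mul_nonneg hl0 (by nlinarith [hlam'.2])) (sq_nonneg _)
      nlinarith [norm_nonneg ((x t - lam t • A (x t)) - (qstar - lam t • A qstar)),
        norm_nonneg (x t - qstar), norm_nonneg (w - qstar)]
    have h2 : ‖y - qstar‖ ≤ ‖x t - qstar‖ := by
      have h3 : ‖S w - S qstar‖ ≤ ‖w - qstar‖ := hS w hwQ qstar hqQ
      rw [hqS] at h3
      exact le_trans h3 h1
    have hdec : x t - qstar = t • (f (x t) - qstar) + (1 - t) • (y - qstar) := by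
      calc x t - qstar = (t • f (x t) + (1 - t) • y) - qstar := by rw [← hxt]
      _ = t • (f (x t) - qstar) + (1 - t) • (y - qstar) := by module
    have hinner : ‖x t - qstar‖^2
        = t * ⟪f (x t) - qstar, x t - qstar⟫ + (1 - t) * ⟪y - qstar, x t - qstar⟫ := by
      have h := congrArg (fun z => ⟪z, x t - qstar⟫) hdec
      simp only [inner_add_left, real_inner_smul_left] at h
      rw [real_inner_self_eq_norm_sq] at h
      exact h
    have hby : ⟪y - qstar, x t - qstar⟫ ≤ ‖x t - qstar‖^2 := by
      have := real_inner_le_norm (y - qstar) (x t - qstar)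
      nlinarith [h2, norm_nonneg (x t - qstar)]
    have hbf : ⟪f (x t) - qstar, x t - qstar⟫ ≤ ρ * ‖x t - qstar‖^2 + ⟪c, x t - qstar⟫ := by
      have e : f (x t) - qstar = (f (x t) - f qstar) + c := by rw [hc]; module
      rw [e, inner_add_left]
      have h5 : ⟪f (x t) - f qstar, x t - qstar⟫ ≤ ρ * ‖x t - qstar‖^2 := by
        have h6 := real_inner_le_norm (f (x t) - f qstar) (x t - qstar)
        have h7 := hf (x t) hxtQ qstar hqQ
        nlinarith [norm_nonneg (x t - qstar), norm_nonneg (f (x t) - f qstar)]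
      linarith
    have hcomb : (1 - ρ) * ‖x t - qstar‖^2 ≤ ⟪c, x t - qstar⟫ := by
      have hA1 : t * ⟪f (x t) - qstar, x t - qstar⟫
          ≤ t * (ρ * ‖x t - qstar‖^2 + ⟪c, x t - qstar⟫) :=
        mul_le_mul_of_nonneg_left hbf (le_of_lt ht0)
      have hA2 : (1 - t) * ⟪y - qstar, x t - qstar⟫ ≤ (1 - t) * ‖x t - qstar‖^2 :=
        mul_le_mul_of_nonneg_left hby (by linarith)
      have h7 : t * ((1 - ρ) * ‖x t - qstar‖^2) ≤ t * ⟪c, x t - qstar⟫ := by nlinarith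
      exact le_of_mul_le_mul_left h7 ht0
    refine ⟨hcomb, ?_, h2⟩
    have h8 : ⟪c, x t - qstar⟫ ≤ ‖c‖ * ‖x t - qstar‖ := real_inner_le_norm _ _
    have h9 : (1 - ρ) * ‖x t - qstar‖^2 ≤ M * (1 - ρ) * ‖x t - qstar‖ := by
      rw [← hMc]; linarith
    by_contra hcon
    push_neg at hcon
    have hD0 : 0 < ‖x t - qstar‖ := lt_of_le_of_lt hM0 hcon
    have h10 : M * ‖x t - qstar‖ < ‖x t - qstar‖ * ‖x t - qstar‖ :=
      mul_lt_mul_of_pos_right hcon hD0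
    nlinarith [mul_lt_mul_of_pos_left h10 hρpos]
  -- eventually in Ioc 0 1
  have hevIoc : ∀ᶠ t in nhdsWithin (0:ℝ) (Set.Ioi 0), t ∈ Set.Ioc (0:ℝ) 1 := by
    filter_upwards [self_mem_nhdsWithin, nhdsWithin_le_nhds (Iio_mem_nhds one_pos)] with t ht1 ht2
    exact ⟨ht1, le_of_lt ht2⟩
  -- KEY ultrafilter claim
  have key : ∀ U : Ultrafilter ℝ, (U : Filter ℝ) ≤ nhdsWithin 0 (Set.Ioi (0:ℝ)) →
      ∃ L, L ≤ 0 ∧ Tendsto (fun t => ⟪c, x t - qstar⟫) (U : Filter ℝ) (𝓝 L) := by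
    intro U hUF
    have hUIoc : ∀ᶠ t in (U : Filter ℝ), t ∈ Set.Ioc (0:ℝ) 1 := hUF hevIoc
    have ht0 : Tendsto (fun t : ℝ => t) (U : Filter ℝ) (𝓝 0) :=
      tendsto_id.mono_right (hUF.trans nhdsWithin_le_nhds)
    have hxb : ∀ᶠ t in (U : Filter ℝ), ‖x t‖ ≤ M + ‖qstar‖ := by
      filter_upwards [hUIoc] with t ht
      have h9 : ‖x t‖ - ‖qstar‖ ≤ ‖x t - qstar‖ := norm_sub_norm_le _ _
      linarith [(hbound t ht).2.1]
    obtain ⟨ω, hω⟩ := weak_lim U x (M + ‖qstar‖) hxb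
    have hωQ : ω ∈ Q := weak_mem Q hQclosed hQconvex U x
      (by filter_upwards [hUIoc] with t ht; exact hxQ t ht) ω hω
    obtain ⟨l, hlmem, hltend⟩ := ult_lim U lam a b
      (by filter_upwards [hUIoc] with t ht; exact hlam t ht)
    have hl0 : 0 < l := lt_of_lt_of_le ha hlmem.1
    have hl2ν : l < 2*ν := lt_of_le_of_lt hlmem.2 hb2ν
    obtain ⟨r, hrmem, hrtend⟩ := ult_lim U (fun t => ‖x t - ω‖) 0 (M + ‖qstar - ω‖) (by
      filter_upwards [hUIoc] with t ht
      refine ⟨norm_nonneg _, ?_⟩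
      have h9 : ‖x t - ω‖ ≤ ‖x t - qstar‖ + ‖qstar - ω‖ := by
        have h10 : x t - ω = (x t - qstar) + (qstar - ω) := by module
        rw [h10]; exact norm_add_le _ _
      linarith [(hbound t ht).2.1])
    set T : H → H := fun z => S (P (z - l • A z)) with hTdef
    have hTnon : ∀ z ∈ Q, ∀ z' ∈ Q, ‖T z - T z'‖ ≤ ‖z - z'‖ := by
      intro z hz z' hz'
      have h1 : ‖T z - T z'‖ ≤ ‖P (z - l • A z) - P (z' - l • A z')‖ :=
        hS _ (hPmem _) _ (hPmem _)
      have h2 := P_nonexp hPmem hP (z - l • A z) (z' - l • A z')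
      have h3 := ism_est hA hz hz' (le_of_lt hl0)
      have h4 : 0 ≤ l * (2*ν - l) * ‖A z - A z'‖^2 :=
        mul_nonneg (mul_nonneg (le_of_lt hl0) (by linarith)) (sq_nonneg _)
      have h5 : ‖(z - l • A z) - (z' - l • A z')‖ ≤ ‖z - z'‖ := by
        nlinarith [norm_nonneg ((z - l • A z) - (z' - l • A z')), norm_nonneg (z - z')]
      linarith
    -- ‖A (x t)‖ bounded
    have hAb : ∀ t ∈ Set.Ioc (0:ℝ) 1, ‖A (x t)‖ ≤ ‖A qstar‖ + M / ν := by
      intro t ht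
      have h1 := hA (x t) (hxQ t ht) qstar hqQ
      have h2 := real_inner_le_norm (A (x t) - A qstar) (x t - qstar)
      have h3 := (hbound t ht).2.1
      have h5 : ‖A (x t) - A qstar‖ ≤ M / ν := by
        rcases eq_or_lt_of_le (norm_nonneg (A (x t) - A qstar)) with he | hlt
        · rw [← he]; positivity
        · rw [le_div_iff₀ hν]; nlinarith
      have h6 : ‖A (x t)‖ - ‖A qstar‖ ≤ ‖A (x t) - A qstar‖ := norm_sub_norm_le _ _
      linarith
    -- x t - T (x t) → 0
    have hxT : Tendsto (fun t => ‖x t - T (x t)‖) (U : Filter ℝ) (𝓝 0) := by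
      have hxTb : ∀ᶠ t in (U : Filter ℝ), ‖x t - T (x t)‖
          ≤ t * (ρ*M + ‖c‖ + M) + |lam t - l| * (‖A qstar‖ + M/ν) := by
        filter_upwards [hUIoc] with t ht
        have hxt := hx t ht
        set w := P (x t - lam t • A (x t)) with hwdef
        set y := S w with hydef
        have e1 : x t - y = t • (f (x t) - y) := by
          calc x t - y = (t • f (x t) + (1 - t) • y) - y := by rw [← hxt]
          _ = t • (f (x t) - y) := by module
        have hfb : ‖f (x t) - f qstar‖ ≤ ρ * M := by
          have := hf (x t) (hxQ t ht) qstar hqQ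
          nlinarith [(hbound t ht).2.1, hρ0]
        have hyM : ‖y - qstar‖ ≤ M := le_trans (hbound t ht).2.2 (hbound t ht).2.1
        have e2 : ‖f (x t) - y‖ ≤ ρ*M + ‖c‖ + M := by
          have h11 := dist_triangle4 (f (x t)) (f qstar) qstar y
          simp only [dist_eq_norm] at h11
          have h12 : ‖qstar - y‖ = ‖y - qstar‖ := norm_sub_rev _ _
          rw [← hc] at h11
          linarith
        have e3 : ‖y - T (x t)‖ ≤ |lam t - l| * (‖A qstar‖ + M/ν) := by
          have h1 : ‖y - T (x t)‖ ≤ ‖(x t - lam t • A (x t)) - (x t - l • A (x t))‖ := by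
            simp only [hydef, hwdef, hTdef]
            exact le_trans (hS _ (hPmem _) _ (hPmem _)) (P_nonexp hPmem hP _ _)
          have h2 : (x t - lam t • A (x t)) - (x t - l • A (x t)) = (l - lam t) • A (x t) := by
            module
          rw [h2, norm_smul, Real.norm_eq_abs] at h1
          have h3 := hAb t ht
          have habs : |l - lam t| = |lam t - l| := abs_sub_comm _ _
          calc ‖y - T (x t)‖ ≤ |l - lam t| * ‖A (x t)‖ := h1
          _ ≤ |l - lam t| * (‖A qstar‖ + M/ν) := mul_le_mul_of_nonneg_left h3 (abs_nonneg _)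
          _ = |lam t - l| * (‖A qstar‖ + M/ν) := by rw [habs]
        have e4 : ‖x t - y‖ ≤ t * (ρ*M + ‖c‖ + M) := by
          rw [e1, norm_smul, Real.norm_eq_abs, abs_of_pos ht.1]
          exact mul_le_mul_of_nonneg_left e2 (le_of_lt ht.1)
        calc ‖x t - T (x t)‖ ≤ ‖x t - y‖ + ‖y - T (x t)‖ := by
              have h13 := dist_triangle (x t) y (T (x t))
              simpa [dist_eq_norm] using h13
        _ ≤ t * (ρ*M + ‖c‖ + M) + |lam t - l| * (‖A qstar‖ + M/ν) := add_le_add e4 e3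
      apply squeeze_zero' (Eventually.of_forall fun t => norm_nonneg _) hxTb
      have hrhs := ((ht0.mul_const (ρ*M + ‖c‖ + M))).add
        (((hltend.sub_const l).abs).mul_const (‖A qstar‖ + M/ν))
      simpa using hrhs
    -- demiclosedness: T ω = ω
    have hTω : T ω = ω := by
      have e : ∀ t, ‖x t - T ω‖^2 = ‖x t - ω‖^2 + 2*⟪ω - T ω, x t - ω⟫ + ‖ω - T ω‖^2 := by
        intro t
        have h0 : x t - T ω = (x t - ω) + (ω - T ω) := by module
        rw [h0, norm_add_sq_real, real_inner_comm]
      have t2 : Tendsto (fun t => ⟪ω - T ω, x t - ω⟫) (U : Filter ℝ) (𝓝 0) := by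
        have h2 := (hω (ω - T ω)).sub_const ⟪ω - T ω, ω⟫
        have h3 : (fun t => ⟪ω - T ω, x t⟫ - ⟪ω - T ω, ω⟫) = fun t => ⟪ω - T ω, x t - ω⟫ := by
          funext t; rw [inner_sub_right]
        rw [h3] at h2
        simpa using h2
      have hlim1 : Tendsto (fun t => ‖x t - T ω‖^2) (U : Filter ℝ)
          (𝓝 (r^2 + ‖ω - T ω‖^2)) := by
        simp only [e]
        have h3 := ((hrtend.pow 2).add (t2.const_mul 2)).add
          (tendsto_const_nhds (x := ‖ω - T ω‖^2))
        simpa using h3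
      have hlim2 : Tendsto (fun t => (‖x t - T (x t)‖ + ‖x t - ω‖)^2) (U : Filter ℝ)
          (𝓝 (r^2)) := by
        have h4 := (hxT.add hrtend).pow 2
        simpa using h4
      have hev : ∀ᶠ t in (U : Filter ℝ),
          ‖x t - T ω‖^2 ≤ (‖x t - T (x t)‖ + ‖x t - ω‖)^2 := by
        filter_upwards [hUIoc] with t ht
        have h1 := dist_triangle (x t) (T (x t)) (T ω)
        simp only [dist_eq_norm] at h1
        have h2 : ‖T (x t) - T ω‖ ≤ ‖x t - ω‖ := hTnon _ (hxQ t ht) _ hωQ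
        nlinarith [norm_nonneg (x t - T ω), norm_nonneg (x t - T (x t)), norm_nonneg (x t - ω)]
      have hle := le_of_tendsto_of_tendsto hlim1 hlim2 hev
      have h5 : ‖ω - T ω‖^2 ≤ 0 := by linarith
      have h6 : ‖ω - T ω‖ = 0 := by nlinarith [norm_nonneg (ω - T ω)]
      have h7 := norm_eq_zero.1 h6
      rw [sub_eq_zero] at h7
      exact h7.symm
    -- ω ∈ Ω
    have hSGω : S (P (ω - l • A ω)) = ω := by
      have h := hTω
      simp only [hTdef] at h
      exact h
    have hωq : ‖ω - qstar‖ ≤ ‖P (ω - l • A ω) - qstar‖ := by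
      have h1 : ‖S (P (ω - l • A ω)) - S qstar‖ ≤ ‖P (ω - l • A ω) - qstar‖ :=
        hS _ (hPmem _) _ hqQ
      rw [hSGω, hqS] at h1
      exact h1
    have hfirm : ‖P (ω - l • A ω) - qstar‖^2
        ≤ ⟪(ω - l • A ω) - (qstar - l • A qstar), P (ω - l • A ω) - qstar⟫ := by
      have h1 := P_firm hPmem hP (ω - l • A ω) (qstar - l • A qstar)
      rw [hPq l (le_of_lt hl0)] at h1
      exact h1
    have hcs : ⟪(ω - l • A ω) - (qstar - l • A qstar), P (ω - l • A ω) - qstar⟫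
        ≤ ‖(ω - l • A ω) - (qstar - l • A qstar)‖ * ‖P (ω - l • A ω) - qstar‖ :=
      real_inner_le_norm _ _
    have hism := ism_est hA hωQ hqQ (le_of_lt hl0)
    have hK : 0 < l * (2*ν - l) := mul_pos hl0 (by linarith)
    have hn0 : ‖A ω - A qstar‖ = 0 := by
      by_contra hne
      have hnpos : 0 < ‖A ω - A qstar‖ := lt_of_le_of_ne (norm_nonneg _) (Ne.symm hne)
      have hKn : 0 < l * (2*ν - l) * ‖A ω - A qstar‖^2 := by positivity
      nlinarith [hfirm, hcs, hism, hωq, norm_nonneg (P (ω - l • A ω) - qstar),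
        norm_nonneg ((ω - l • A ω) - (qstar - l • A qstar)), norm_nonneg (ω - qstar),
        sq_nonneg (‖P (ω - l • A ω) - qstar‖ - ‖(ω - l • A ω) - (qstar - l • A qstar)‖)]
    have hAeq : A ω = A qstar := by
      rw [← sub_eq_zero]; exact norm_eq_zero.1 hn0
    have huv : (ω - l • A ω) - (qstar - l • A qstar) = ω - qstar := by
      rw [hAeq]; module
    have hGωω : P (ω - l • A ω) = ω := by
      rw [huv] at hfirm hcs
      have hexp : ‖(ω - qstar) - (P (ω - l • A ω) - qstar)‖^2
          = ‖ω - qstar‖^2 - 2*⟪ω - qstar, P (ω - l • A ω) - qstar⟫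
            + ‖P (ω - l • A ω) - qstar‖^2 := norm_sub_sq_real _ _
      have h9 : ‖(ω - qstar) - (P (ω - l • A ω) - qstar)‖^2 ≤ 0 := by
        nlinarith [norm_nonneg (P (ω - l • A ω) - qstar), norm_nonneg (ω - qstar), hωq,
          mul_le_mul_of_nonneg_left hωq (norm_nonneg (P (ω - l • A ω) - qstar))]
      have h10 : (ω - qstar) - (P (ω - l • A ω) - qstar) = ω - P (ω - l • A ω) := by module
      rw [h10] at h9
      have h11 : ‖ω - P (ω - l • A ω)‖ = 0 := by nlinarith [norm_nonneg (ω - P (ω - l • A ω))]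
      have h12 := norm_eq_zero.1 h11
      rw [sub_eq_zero] at h12
      exact h12.symm
    have hSω : S ω = ω := by rw [hGωω] at hSGω; exact hSGω
    have hVIω : ∀ z ∈ Q, 0 ≤ ⟪A ω, z - ω⟫ := by
      intro z hz
      have h1 := hP (ω - l • A ω) z hz
      rw [hGωω] at h1
      have h3 : (ω - l • A ω) - ω = (-l) • A ω := by module
      rw [h3, real_inner_smul_left] at h1
      nlinarith
    have hωΩ : ω ∈ Ω := by
      rw [hΩ]; exact ⟨⟨hωQ, hSω⟩, hωQ, hVIω⟩
    refine ⟨⟪c, ω - qstar⟫, hqstarVI ω hωΩ, ?_⟩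
    have h2 := (hω c).sub_const ⟪c, qstar⟫
    simp only [← inner_sub_right] at h2
    exact h2
  -- conclude
  have hcob : IsCoboundedUnder (· ≤ ·) (nhdsWithin (0:ℝ) (Set.Ioi 0))
      (fun t => ⟪c, x t - qstar⟫) := by
    have hbdd : IsBoundedUnder (· ≥ ·) (nhdsWithin (0:ℝ) (Set.Ioi 0))
        (fun t => ⟪c, x t - qstar⟫) := by
      refine ⟨-(‖c‖ * M), ?_⟩
      rw [Filter.eventually_map]
      filter_upwards [hevIoc] with t ht
      have h1 := abs_real_inner_le_norm c (x t - qstar)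
      have h2 : ‖c‖ * ‖x t - qstar‖ ≤ ‖c‖ * M :=
        mul_le_mul_of_nonneg_left (hbound t ht).2.1 (norm_nonneg c)
      have h3 := neg_abs_le ⟪c, x t - qstar⟫
      simp only [ge_iff_le]
      linarith
    exact hbdd.isCoboundedUnder_le
  have hfin : ∀ ε : ℝ, 0 < ε →
      Filter.limsup (fun t => ⟪c, x t - qstar⟫) (nhdsWithin 0 (Set.Ioi (0:ℝ))) ≤ 0 + ε := by
    intro ε hε
    rw [zero_add]
    by_cases hev : ∀ᶠ t in nhdsWithin (0:ℝ) (Set.Ioi 0), ⟪c, x t - qstar⟫ ≤ ε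
    · exact Filter.limsup_le_of_le hcob hev
    · exfalso
      have hfreq : ∃ᶠ t in nhdsWithin (0:ℝ) (Set.Ioi 0), ε < ⟪c, x t - qstar⟫ := by
        rw [Filter.not_eventually] at hev
        exact hev.mono fun t ht => lt_of_not_ge ht
      have hNB : (nhdsWithin (0:ℝ) (Set.Ioi 0) ⊓
          Filter.principal {t | ε < ⟪c, x t - qstar⟫}).NeBot :=
        Filter.frequently_iff_neBot.1 hfreq
      set U := Ultrafilter.of (nhdsWithin (0:ℝ) (Set.Ioi 0) ⊓
        Filter.principal {t | ε < ⟪c, x t - qstar⟫}) with hUdef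
      have hUle := Ultrafilter.of_le (nhdsWithin (0:ℝ) (Set.Ioi 0) ⊓
        Filter.principal {t | ε < ⟪c, x t - qstar⟫})
      have hUF : (U : Filter ℝ) ≤ nhdsWithin (0:ℝ) (Set.Ioi 0) := hUle.trans inf_le_left
      obtain ⟨L, hL0, hLt⟩ := key U hUF
      have hUP : (U : Filter ℝ) ≤ Filter.principal {t | ε < ⟪c, x t - qstar⟫} :=
        hUle.trans inf_le_right
      have hev2 : ∀ᶠ t in (U : Filter ℝ), ε < ⟪c, x t - qstar⟫ :=
        Filter.le_principal_iff.1 hUP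
      have hεL : ε ≤ L := ge_of_tendsto hLt (hev2.mono fun t ht => le_of_lt ht)
      linarith
  exact le_of_forall_pos_le_add hfin
end

section
/- Let H be a real Hilbert space, Q ⊆ H a nonempty closed convex set, ν > 0, A : Q → H a ν-inverse strongly monotone operator, S : Q → Q a nonexpansive mapping, and f : Q → Q a contraction with coefficient ρ ∈ [0,1). Assume Ω = Fix(S) ∩ S_VI(A,Q) is nonempty. Let {α_n} ⊆ (0,1] and {λ_n} ⊆ [0,2ν] be arbitrary sequences, x_1 ∈ Q, and define x_{n+1} = α_n·f(x_n) + (1 − α_n)·S(P_Q(x_n − λ_n·A x_n)). Then for every q ∈ Ω and every n, ‖x_n − q‖ ≤ max{‖x_1 − q‖, (1/(1 − ρ))·‖f(q) − q‖}; in particular the sequence {x_n} is bounded in H. -/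
open scoped RealInnerProductSpace

/-- For arbitrary `{α_n} ⊆ (0,1]` and `{λ_n} ⊆ [0,2ν]`, the iterates
`x_{n+1} = α_n f(x_n) + (1 - α_n) S(P_Q(x_n - λ_n A x_n))` satisfy, for every `q ∈ Ω`,
`‖x_n - q‖ ≤ max{‖x_0 - q‖, ‖f(q) - q‖/(1 - ρ)}`; in particular `{x_n}` is bounded. -/
theorem stmt_14 {H : Type*} [NormedAddCommGroup H] [InnerProductSpace ℝ H] [CompleteSpace H]
    (Q : Set H) (hQne : Q.Nonempty) (hQclosed : IsClosed Q) (hQconvex : Convex ℝ Q)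
    (ν : ℝ) (hν : 0 < ν)
    (A : H → H) (hA : ∀ x ∈ Q, ∀ y ∈ Q, ν * ‖A x - A y‖ ^ 2 ≤ ⟪A x - A y, x - y⟫)
    (P : H → H) (hPmem : ∀ x, P x ∈ Q)
    (hP : ∀ (x : H), ∀ y ∈ Q, ⟪x - P x, y - P x⟫ ≤ 0)
    (S : H → H) (hSmem : ∀ x ∈ Q, S x ∈ Q)
    (hS : ∀ x ∈ Q, ∀ y ∈ Q, ‖S x - S y‖ ≤ ‖x - y‖)
    (ρ : ℝ) (hρ : ρ ∈ Set.Ico (0 : ℝ) 1)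
    (f : H → H) (hfmem : ∀ x ∈ Q, f x ∈ Q)
    (hf : ∀ x ∈ Q, ∀ y ∈ Q, ‖f x - f y‖ ≤ ρ * ‖x - y‖)
    (Ω : Set H)
    (hΩ : Ω = {x : H | x ∈ Q ∧ S x = x} ∩ {q : H | q ∈ Q ∧ ∀ x ∈ Q, 0 ≤ ⟪A q, x - q⟫})
    (hΩne : Ω.Nonempty)
    (α lam : ℕ → ℝ)
    (hα : ∀ n, α n ∈ Set.Ioc (0 : ℝ) 1) (hlam : ∀ n, lam n ∈ Set.Icc (0 : ℝ) (2 * ν))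
    (x : ℕ → H) (hx0 : x 0 ∈ Q)
    (hxrec : ∀ n, x (n + 1) = α n • f (x n) + (1 - α n) • S (P (x n - lam n • A (x n)))) :
    (∀ q ∈ Ω, ∀ n : ℕ, ‖x n - q‖ ≤ max ‖x 0 - q‖ ((1 / (1 - ρ)) * ‖f q - q‖)) ∧
      ∃ M : ℝ, ∀ n : ℕ, ‖x n‖ ≤ M := by
  obtain ⟨hρ0, hρ1⟩ := hρ
  have h1ρ : (0:ℝ) < 1 - ρ := by linarith
  -- all iterates stay in Q
  have xQ : ∀ n, x n ∈ Q := by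
    intro n
    induction n with
    | zero => exact hx0
    | succ n ih =>
      rw [hxrec]
      exact hQconvex (hfmem _ ih) (hSmem _ (hPmem _)) (hα n).1.le
        (by linarith [(hα n).2]) (by ring)
  have main : ∀ q ∈ Ω, ∀ n : ℕ, ‖x n - q‖ ≤ max ‖x 0 - q‖ ((1 / (1 - ρ)) * ‖f q - q‖) := by
    intro q hqΩ
    rw [hΩ] at hqΩ
    obtain ⟨⟨hqQ, hSq⟩, _, hVI⟩ := hqΩ
    set M := max ‖x 0 - q‖ ((1 / (1 - ρ)) * ‖f q - q‖) with hMdef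
    have hfq : ‖f q - q‖ ≤ (1 - ρ) * M := by
      have h2 : (1 / (1 - ρ)) * ‖f q - q‖ ≤ M := le_max_right _ _
      calc ‖f q - q‖ = (1 - ρ) * ((1 / (1 - ρ)) * ‖f q - q‖) := by field_simp
        _ ≤ (1 - ρ) * M := by nlinarith
    intro n
    induction n with
    | zero => exact le_max_left _ _
    | succ n ih =>
      set y := P (x n - lam n • A (x n)) with hy
      have hyQ : y ∈ Q := hPmem _
      obtain ⟨hl0, hl2⟩ := hlam n
      obtain ⟨ha0, ha1⟩ := hα n
      have hxnQ := xQ n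
      set w := (x n - q) - lam n • (A (x n) - A q) with hw
      -- ‖w‖ ≤ ‖x n - q‖ via inverse strong monotonicity
      have hwle : ‖w‖ ≤ ‖x n - q‖ := by
        have hism := hA (x n) hxnQ q hqQ
        have hsq : ‖w‖ ^ 2 ≤ ‖x n - q‖ ^ 2 := by
          rw [hw, norm_sub_sq_real, real_inner_smul_right, norm_smul,
            Real.norm_of_nonneg hl0, real_inner_comm]
          nlinarith [sq_nonneg ‖A (x n) - A q‖,
            mul_nonneg hl0 (sq_nonneg ‖A (x n) - A q‖)]
        nlinarith [norm_nonneg w, norm_nonneg (x n - q)]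
      -- ‖y - q‖ ≤ ‖w‖
      have hyle : ‖y - q‖ ≤ ‖x n - q‖ := by
        have hproj : ⟪(x n - lam n • A (x n)) - y, q - y⟫ ≤ 0 := hP _ q hqQ
        have hAq : 0 ≤ ⟪A q, y - q⟫ := hVI y hyQ
        have e0 : ⟪(x n - lam n • A (x n)) - y, y - q⟫
            = -⟪(x n - lam n • A (x n)) - y, q - y⟫ := by
          rw [← inner_neg_right, neg_sub]
        have e1 : ⟪(x n - lam n • A (x n)) - q, y - q⟫
            = ⟪(x n - lam n • A (x n)) - y, y - q⟫ + ‖y - q‖ ^ 2 := by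
          have hd : (x n - lam n • A (x n)) - q
              = ((x n - lam n • A (x n)) - y) + (y - q) := by abel
          rw [hd, inner_add_left, real_inner_self_eq_norm_sq]
        have e2 : ⟪(x n - lam n • A (x n)) - q, y - q⟫
            = ⟪w, y - q⟫ + (-(lam n)) * ⟪A q, y - q⟫ := by
          have hd : (x n - lam n • A (x n)) - q = w + (-(lam n)) • A q := by
            rw [hw]; module
          rw [hd, inner_add_left, real_inner_smul_left]
        have key : ‖y - q‖ ^ 2 ≤ ⟪w, y - q⟫ := by nlinarith [mul_nonneg hl0 hAq]
        have key2 : ‖y - q‖ ^ 2 ≤ ‖w‖ * ‖y - q‖ :=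
          key.trans (real_inner_le_norm _ _)
        nlinarith [norm_nonneg (y - q), norm_nonneg w]
      -- contraction/nonexpansive estimates
      have hfx : ‖f (x n) - q‖ ≤ ρ * ‖x n - q‖ + ‖f q - q‖ := by
        have hd : f (x n) - q = (f (x n) - f q) + (f q - q) := by abel
        calc ‖f (x n) - q‖ ≤ ‖f (x n) - f q‖ + ‖f q - q‖ := by
              rw [hd]; exact norm_add_le _ _
          _ ≤ ρ * ‖x n - q‖ + ‖f q - q‖ := by
              have := hf (x n) hxnQ q hqQ; linarith
      have hSy : ‖S y - q‖ ≤ ‖x n - q‖ := by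
        calc ‖S y - q‖ = ‖S y - S q‖ := by rw [hSq]
          _ ≤ ‖y - q‖ := hS y hyQ q hqQ
          _ ≤ ‖x n - q‖ := hyle
      have hstep : ‖x (n + 1) - q‖
          ≤ α n * (ρ * ‖x n - q‖ + ‖f q - q‖) + (1 - α n) * ‖x n - q‖ := by
        have hx' : x (n + 1) - q = α n • (f (x n) - q) + (1 - α n) • (S y - q) := by
          rw [hxrec]; module
        rw [hx']
        calc ‖α n • (f (x n) - q) + (1 - α n) • (S y - q)‖
            ≤ ‖α n • (f (x n) - q)‖ + ‖(1 - α n) • (S y - q)‖ := norm_add_le _ _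
          _ = α n * ‖f (x n) - q‖ + (1 - α n) * ‖S y - q‖ := by
              rw [norm_smul, norm_smul, Real.norm_of_nonneg ha0.le,
                Real.norm_of_nonneg (by linarith)]
          _ ≤ α n * (ρ * ‖x n - q‖ + ‖f q - q‖) + (1 - α n) * ‖x n - q‖ :=
              add_le_add (mul_le_mul_of_nonneg_left hfx ha0.le)
                (mul_le_mul_of_nonneg_left hSy (by linarith))
      have hMnonneg : 0 ≤ M := le_trans (norm_nonneg _) (le_max_left _ _)
      nlinarith [mul_nonneg ha0.le hρ0, mul_le_mul_of_nonneg_left ih (mul_nonneg ha0.le hρ0),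
        mul_le_mul_of_nonneg_left hfq ha0.le,
        mul_le_mul_of_nonneg_left ih (show (0:ℝ) ≤ 1 - α n by linarith)]
  refine ⟨main, ?_⟩
  obtain ⟨q, hq⟩ := hΩne
  refine ⟨max ‖x 0 - q‖ ((1 / (1 - ρ)) * ‖f q - q‖) + ‖q‖, fun n => ?_⟩
  calc ‖x n‖ = ‖(x n - q) + q‖ := by rw [sub_add_cancel]
    _ ≤ ‖x n - q‖ + ‖q‖ := norm_add_le _ _
    _ ≤ _ := by linarith [main q hq n]
end

section
/- Let H be a real Hilbert space, Q ⊆ H a nonempty closed convex set, ν > 0, A : Q → H a ν-inverse strongly monotone operator, S : Q → Q a nonexpansive mapping, and f : Q → Q a contraction with coefficient ρ ∈ [0,1). Assume Ω = Fix(S) ∩ S_VI(A,Q) is nonempty. Let {α_n} ⊆ (0,1] and {λ_n} ⊆ [a,b] with 0 < a < b < 2ν be sequences such that α_n → 0, ∑ α_n = +∞, ∑ |α_{n+1} − α_n| < ∞ and ∑ |λ_{n+1} − λ_n| < ∞. Let x_1 ∈ Q and x_{n+1} = α_n·f(x_n) + (1 − α_n)·S(P_Q(x_n − λ_n·A x_n)).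 Then ‖x_{n+1} − x_n‖ → 0 as n → ∞. -/
open scoped RealInnerProductSpace
open Filter Finset

lemma xu_lemma (s γ δ : ℕ → ℝ) (hs : ∀ n, 0 ≤ s n)
    (hγ0 : ∀ n, 0 < γ n) (hγ1 : ∀ n, γ n ≤ 1)
    (hδ0 : ∀ n, 0 ≤ δ n) (hδsum : Summable δ)
    (hγdiv : Tendsto (fun N => ∑ n ∈ range N, γ n) atTop atTop)
    (hrec : ∀ n, s (n + 1) ≤ (1 - γ n) * s n + δ n) :
    Tendsto s atTop (nhds 0) := by
  have key : ∀ N n, N ≤ n →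
      s n ≤ s N * ∏ k ∈ Ico N n, (1 - γ k) + ∑ k ∈ Ico N n, δ k := by
    intro N n hNn
    induction n with
    | zero =>
      have : N = 0 := Nat.le_zero.mp hNn
      subst this; simp
    | succ n ih =>
      rcases Nat.lt_or_ge N (n+1) with h | h
      · have hNn' : N ≤ n := Nat.lt_succ_iff.mp h
        have ih' := ih hNn'
        have h1 : 0 ≤ 1 - γ n := by linarith [hγ1 n]
        have hsum0 : 0 ≤ ∑ k ∈ Ico N n, δ k := Finset.sum_nonneg (fun k _ => hδ0 k)
        calc s (n+1) ≤ (1 - γ n) * s n + δ n := hrec n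
          _ ≤ (1 - γ n) * (s N * ∏ k ∈ Ico N n, (1 - γ k) + ∑ k ∈ Ico N n, δ k) + δ n := by
              have := mul_le_mul_of_nonneg_left ih' h1
              linarith
          _ ≤ s N * ∏ k ∈ Ico N (n+1), (1 - γ k) + ∑ k ∈ Ico N (n+1), δ k := by
              rw [Finset.prod_Ico_succ_top hNn', Finset.sum_Ico_succ_top hNn']
              have hg := (hγ0 n).le
              nlinarith [mul_nonneg hg hsum0]
      · have hN : N = n + 1 := le_antisymm hNn h
        subst hN; simp
  have hPnn : ∀ N n, (0:ℝ) ≤ ∏ k ∈ Ico N n, (1 - γ k) :=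
    fun N n => Finset.prod_nonneg (fun k _ => by linarith [hγ1 k])
  have hPexp : ∀ N n, ∏ k ∈ Ico N n, (1 - γ k) ≤ Real.exp (-(∑ k ∈ Ico N n, γ k)) := by
    intro N n
    calc ∏ k ∈ Ico N n, (1 - γ k) ≤ ∏ k ∈ Ico N n, Real.exp (-γ k) := by
          apply Finset.prod_le_prod (fun k _ => by linarith [hγ1 k])
          intro k _
          have := Real.add_one_le_exp (-γ k)
          linarith
      _ = Real.exp (-(∑ k ∈ Ico N n, γ k)) := by
          rw [← Real.exp_sum]; congr 1; rw [Finset.sum_neg_distrib]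
  have hScau : CauchySeq (fun n => ∑ k ∈ range n, δ k) := hδsum.hasSum.tendsto_sum_nat.cauchySeq
  rw [Metric.tendsto_atTop]
  intro ε hε
  obtain ⟨N, hN⟩ := Metric.cauchySeq_iff'.mp hScau (ε/4) (by linarith)
  have htail : ∀ n, N ≤ n → ∑ k ∈ Ico N n, δ k ≤ ε/4 := by
    intro n hn
    have := hN n hn
    rw [Real.dist_eq] at this
    have he : ∑ k ∈ Ico N n, δ k = ∑ k ∈ range n, δ k - ∑ k ∈ range N, δ k := by
      rw [Finset.sum_Ico_eq_sub _ hn]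
    rw [he]
    have := abs_lt.mp this
    linarith [this.1, this.2]
  -- product tends to zero
  have hprod0 : Tendsto (fun n => s N * ∏ k ∈ Ico N n, (1 - γ k)) atTop (nhds 0) := by
    have h1 : Tendsto (fun n => Real.exp (-(∑ k ∈ range n, γ k - ∑ k ∈ range N, γ k))) atTop (nhds 0) := by
      apply Real.tendsto_exp_atBot.comp
      apply Filter.tendsto_neg_atBot_iff.mpr
      exact tendsto_atTop_add_const_right atTop (-(∑ k ∈ range N, γ k)) hγdiv |>.congr (fun n => by ring)
    have h2 : Tendsto (fun n => ∏ k ∈ Ico N n, (1 - γ k)) atTop (nhds 0) := by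
      apply squeeze_zero' (Filter.Eventually.of_forall (fun n => hPnn N n))
      · filter_upwards [Filter.eventually_ge_atTop N] with n hn
        calc ∏ k ∈ Ico N n, (1 - γ k) ≤ Real.exp (-(∑ k ∈ Ico N n, γ k)) := hPexp N n
          _ = Real.exp (-(∑ k ∈ range n, γ k - ∑ k ∈ range N, γ k)) := by
              rw [Finset.sum_Ico_eq_sub _ hn]
      · exact h1
    simpa using h2.const_mul (s N)
  have hev : ∀ᶠ n in atTop, s N * ∏ k ∈ Ico N n, (1 - γ k) < ε/2 := by
    have := hprod0.eventually (eventually_lt_nhds (show (0:ℝ) < ε/2 by linarith))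
    simpa using this
  rw [Filter.eventually_atTop] at hev
  obtain ⟨N', hN'⟩ := hev
  refine ⟨max N N', fun n hn => ?_⟩
  have hn1 : N ≤ n := le_trans (le_max_left _ _) hn
  have hn2 : N' ≤ n := le_trans (le_max_right _ _) hn
  have h1 := key N n hn1
  have h2 := hN' n hn2
  have h3 := htail n hn1
  rw [Real.dist_eq, sub_zero, abs_of_nonneg (hs n)]
  linarith

set_option maxHeartbeats 800000 in
/-- Under the summability conditions, `‖x_{n+1} - x_n‖ → 0`. -/
theorem stmt_15 {H : Type*} [NormedAddCommGroup H] [InnerProductSpace ℝ H] [CompleteSpace H]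
    (Q : Set H) (hQne : Q.Nonempty) (hQclosed : IsClosed Q) (hQconvex : Convex ℝ Q)
    (ν : ℝ) (hν : 0 < ν)
    (A : H → H) (hA : ∀ x ∈ Q, ∀ y ∈ Q, ν * ‖A x - A y‖ ^ 2 ≤ ⟪A x - A y, x - y⟫)
    (P : H → H) (hPmem : ∀ x, P x ∈ Q)
    (hP : ∀ (x : H), ∀ y ∈ Q, ⟪x - P x, y - P x⟫ ≤ 0)
    (S : H → H) (hSmem : ∀ x ∈ Q, S x ∈ Q)
    (hS : ∀ x ∈ Q, ∀ y ∈ Q, ‖S x - S y‖ ≤ ‖x - y‖)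
    (ρ : ℝ) (hρ : ρ ∈ Set.Ico (0 : ℝ) 1)
    (f : H → H) (hfmem : ∀ x ∈ Q, f x ∈ Q)
    (hf : ∀ x ∈ Q, ∀ y ∈ Q, ‖f x - f y‖ ≤ ρ * ‖x - y‖)
    (Ω : Set H)
    (hΩ : Ω = {x : H | x ∈ Q ∧ S x = x} ∩ {q : H | q ∈ Q ∧ ∀ x ∈ Q, 0 ≤ ⟪A q, x - q⟫})
    (hΩne : Ω.Nonempty)
    (a b : ℝ) (hab : 0 < a ∧ a < b ∧ b < 2 * ν)
    (α lam : ℕ → ℝ)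
    (hα : ∀ n, α n ∈ Set.Ioc (0 : ℝ) 1) (hlam : ∀ n, lam n ∈ Set.Icc a b)
    (hα0 : Filter.Tendsto α Filter.atTop (nhds 0))
    (hαdiv : Filter.Tendsto (fun N => ∑ n ∈ Finset.range N, α n) Filter.atTop Filter.atTop)
    (hαvar : Summable (fun n => |α (n + 1) - α n|))
    (hlamvar : Summable (fun n => |lam (n + 1) - lam n|))
    (x : ℕ → H) (hx0 : x 0 ∈ Q)
    (hxrec : ∀ n, x (n + 1) = α n • f (x n) + (1 - α n) • S (P (x n - lam n • A (x n)))) :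
    Filter.Tendsto (fun n => ‖x (n + 1) - x n‖) Filter.atTop (nhds 0) := by
  obtain ⟨ha, hab', hb2ν⟩ := hab
  obtain ⟨ρ0, ρ1⟩ := hρ
  obtain ⟨p, hpmem⟩ := hΩne
  rw [hΩ] at hpmem
  obtain ⟨⟨hpQ, hpS⟩, ⟨-, hpVI⟩⟩ := hpmem
  -- P is nonexpansive
  have hPnon : ∀ u v : H, ‖P u - P v‖ ≤ ‖u - v‖ := by
    intro u v
    have h1 : ⟪u - P u, P v - P u⟫ ≤ 0 := hP u (P v) (hPmem v)
    have h2 : ⟪v - P v, P u - P v⟫ ≤ 0 := hP v (P u) (hPmem u)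
    have e1 : ⟪u - P u, P u - P v⟫ = -⟪u - P u, P v - P u⟫ := by
      rw [← inner_neg_right]; congr 1; abel
    have h3 : (0:ℝ) ≤ ⟪(u - P u) - (v - P v), P u - P v⟫ := by
      rw [inner_sub_left, e1]
      linarith
    have h4 : ‖P u - P v‖ ^ 2 ≤ ⟪u - v, P u - P v⟫ := by
      have e : ⟪u - v, P u - P v⟫ = ⟪(u - P u) - (v - P v), P u - P v⟫
          + ⟪P u - P v, P u - P v⟫ := by
        rw [← inner_add_left]; congr 1; abel
      rw [e, real_inner_self_eq_norm_sq]
      linarith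
    have h5 := (real_inner_le_norm (u - v) (P u - P v))
    by_cases hd : P u - P v = 0
    · rw [hd]; simp
    · have hdpos : 0 < ‖P u - P v‖ := norm_pos_iff.mpr hd
      nlinarith [h4.trans h5]
  -- T is nonexpansive on Q
  have hTnon : ∀ l : ℝ, l ∈ Set.Icc a b → ∀ u ∈ Q, ∀ v ∈ Q,
      ‖P (u - l • A u) - P (v - l • A v)‖ ≤ ‖u - v‖ := by
    intro l hl u hu v hv
    refine (hPnon _ _).trans ?_
    have e : (u - l • A u) - (v - l • A v) = (u - v) - l • (A u - A v) := by
      rw [smul_sub]; abel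
    rw [e]
    have hlpos : 0 < l := lt_of_lt_of_le ha hl.1
    have hl2ν : l < 2 * ν := lt_of_le_of_lt hl.2 hb2ν
    have hsq : ‖(u - v) - l • (A u - A v)‖ ^ 2 ≤ ‖u - v‖ ^ 2 := by
      rw [norm_sub_sq_real, real_inner_smul_right, norm_smul, Real.norm_eq_abs,
        abs_of_pos hlpos, mul_pow]
      have hAuv := hA u hu v hv
      have hcomm := real_inner_comm (A u - A v) (u - v)
      nlinarith [mul_le_mul_of_nonneg_left hAuv (by positivity : (0:ℝ) ≤ 2 * l),
        mul_nonneg (mul_nonneg (by linarith : (0:ℝ) ≤ 2 * ν - l) hlpos.le)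
          (sq_nonneg ‖A u - A v‖)]
    have := Real.sqrt_le_sqrt hsq
    rwa [Real.sqrt_sq (norm_nonneg _), Real.sqrt_sq (norm_nonneg _)] at this
  -- p is a fixed point of the projected gradient map
  have hpfix : ∀ l : ℝ, 0 ≤ l → P (p - l • A p) = p := by
    intro l hl
    set z := p - l • A p with hz
    have h1 : ⟪z - P z, p - P z⟫ ≤ 0 := hP z p hpQ
    have h2 : ⟪z - p, P z - p⟫ ≤ 0 := by
      have e : z - p = -(l • A p) := by rw [hz]; abel
      rw [e, inner_neg_left, real_inner_smul_left]
      have hvi := hpVI (P z) (hPmem z)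
      nlinarith
    have h2' : -⟪z - p, p - P z⟫ ≤ 0 := by
      rw [← inner_neg_right]
      have e : -(p - P z) = P z - p := by abel
      rw [e]; exact h2
    have e2 : ⟪z - P z, p - P z⟫ - ⟪z - p, p - P z⟫ = ⟪p - P z, p - P z⟫ := by
      rw [← inner_sub_left]; congr 1; abel
    have h3 : ⟪p - P z, p - P z⟫ ≤ (0:ℝ) := by linarith
    have h4 : p - P z = 0 := real_inner_self_nonpos.mp h3
    exact (sub_eq_zero.mp h4).symm
  -- membership
  have hxQ : ∀ n, x n ∈ Q := by
    intro n
    induction n with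
    | zero => exact hx0
    | succ n ih =>
      rw [hxrec n]
      have h1 : f (x n) ∈ Q := hfmem _ ih
      have h2 : S (P (x n - lam n • A (x n))) ∈ Q := hSmem _ (hPmem _)
      have hαn := hα n
      exact hQconvex h1 h2 hαn.1.le (by linarith [hαn.2]) (by ring)
  -- constants
  set C : ℝ := ‖f p - p‖ with hC
  set M : ℝ := max ‖x 0 - p‖ (C / (1 - ρ)) with hM
  have hM0 : 0 ≤ M := le_trans (norm_nonneg _) (le_max_left _ _)
  have hC0 : 0 ≤ C := norm_nonneg _
  have hCM : C ≤ (1 - ρ) * M := by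
    have h1 : C / (1 - ρ) ≤ M := le_max_right _ _
    have h2 : 0 < 1 - ρ := by linarith
    calc C = (1 - ρ) * (C / (1 - ρ)) := by field_simp
      _ ≤ (1 - ρ) * M := by gcongr
  -- contraction estimate on f
  have hfx : ∀ n, ‖f (x n) - p‖ ≤ ρ * ‖x n - p‖ + C := by
    intro n
    have e : f (x n) - p = (f (x n) - f p) + (f p - p) := by abel
    calc ‖f (x n) - p‖ = ‖(f (x n) - f p) + (f p - p)‖ := by rw [← e]
      _ ≤ ‖f (x n) - f p‖ + ‖f p - p‖ := norm_add_le _ _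
      _ ≤ ρ * ‖x n - p‖ + C := by
          have := hf (x n) (hxQ n) p hpQ
          rw [hC]; linarith
  -- y estimate
  have hy : ∀ n, ‖S (P (x n - lam n • A (x n))) - p‖ ≤ ‖x n - p‖ := by
    intro n
    have h1 : ‖S (P (x n - lam n • A (x n))) - S p‖ ≤ ‖P (x n - lam n • A (x n)) - p‖ :=
      hS _ (hPmem _) _ hpQ
    rw [hpS] at h1
    refine h1.trans ?_
    have h2 := hTnon (lam n) (hlam n) (x n) (hxQ n) p hpQ
    rw [hpfix (lam n) (le_of_lt (lt_of_lt_of_le ha (hlam n).1))] at h2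
    exact h2
  -- boundedness
  have hbd : ∀ n, ‖x n - p‖ ≤ M := by
    intro n
    induction n with
    | zero => exact le_max_left _ _
    | succ n ih =>
      have hαn := hα n
      rw [hxrec n]
      have e : α n • f (x n) + (1 - α n) • S (P (x n - lam n • A (x n))) - p
          = α n • (f (x n) - p) + (1 - α n) • (S (P (x n - lam n • A (x n))) - p) := by
        module
      rw [e]
      calc ‖α n • (f (x n) - p) + (1 - α n) • (S (P (x n - lam n • A (x n))) - p)‖
          ≤ ‖α n • (f (x n) - p)‖ + ‖(1 - α n) • (S (P (x n - lam n • A (x n))) - p)‖ :=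
            norm_add_le _ _
        _ = α n * ‖f (x n) - p‖ + (1 - α n) * ‖S (P (x n - lam n • A (x n))) - p‖ := by
            rw [norm_smul, norm_smul, Real.norm_eq_abs, Real.norm_eq_abs,
              abs_of_pos hαn.1, abs_of_nonneg (by linarith [hαn.2] : (0:ℝ) ≤ 1 - α n)]
        _ ≤ M := by
            have h1 := hfx n
            have h2 := hy n
            have c1 := mul_le_mul_of_nonneg_left h1 hαn.1.le
            have c2 := mul_le_mul_of_nonneg_left (h2.trans ih)
              (by linarith [hαn.2] : (0:ℝ) ≤ 1 - α n)
            have c3 := mul_le_mul_of_nonneg_left ih (mul_nonneg hαn.1.le ρ0)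
            have c4 := mul_le_mul_of_nonneg_left hCM hαn.1.le
            nlinarith [c1, c2, c3, c4]
  -- bound on A (x n)
  set KA : ℝ := M / ν + ‖A p‖ with hKA
  have hKA0 : 0 ≤ KA := by
    have t1 := div_nonneg hM0 hν.le
    have t2 := norm_nonneg (A p)
    rw [hKA]; linarith
  have hAbd : ∀ n, ‖A (x n)‖ ≤ KA := by
    intro n
    have h1 := hA (x n) (hxQ n) p hpQ
    have h2 := real_inner_le_norm (A (x n) - A p) (x n - p)
    have h4 : ‖A (x n) - A p‖ ≤ M / ν := by
      by_cases h : A (x n) - A p = 0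
      · rw [h]; simp; positivity
      · have hpos : 0 < ‖A (x n) - A p‖ := norm_pos_iff.mpr h
        rw [le_div_iff₀ hν]
        nlinarith [hbd n, mul_le_mul_of_nonneg_left (hbd n) (norm_nonneg (A (x n) - A p))]
    have e : A (x n) = (A (x n) - A p) + A p := by abel
    calc ‖A (x n)‖ = ‖(A (x n) - A p) + A p‖ := by rw [← e]
      _ ≤ ‖A (x n) - A p‖ + ‖A p‖ := norm_add_le _ _
      _ ≤ KA := by rw [hKA]; linarith
  -- bound K1 on f x n - y n
  set K1 : ℝ := ρ * M + C + M with hK1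
  have hK10 : 0 ≤ K1 := by rw [hK1]; nlinarith
  have hfy : ∀ n, ‖f (x n) - S (P (x n - lam n • A (x n)))‖ ≤ K1 := by
    intro n
    have e : f (x n) - S (P (x n - lam n • A (x n)))
        = (f (x n) - p) - (S (P (x n - lam n • A (x n))) - p) := by abel
    calc ‖f (x n) - S (P (x n - lam n • A (x n)))‖
        = ‖(f (x n) - p) - (S (P (x n - lam n • A (x n))) - p)‖ := by rw [← e]
      _ ≤ ‖f (x n) - p‖ + ‖S (P (x n - lam n • A (x n))) - p‖ := norm_sub_le _ _
      _ ≤ K1 := by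
          have h1 := hfx n
          have h2 := hy n
          have h3 := hbd n
          rw [hK1]; nlinarith
  -- difference of y's
  have hyd : ∀ n, ‖S (P (x (n+1) - lam (n+1) • A (x (n+1)))) - S (P (x n - lam n • A (x n)))‖
      ≤ ‖x (n+1) - x n‖ + KA * |lam (n+1) - lam n| := by
    intro n
    have h1 : ‖S (P (x (n+1) - lam (n+1) • A (x (n+1)))) - S (P (x n - lam n • A (x n)))‖
        ≤ ‖P (x (n+1) - lam (n+1) • A (x (n+1))) - P (x n - lam n • A (x n))‖ :=
      hS _ (hPmem _) _ (hPmem _)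
    refine h1.trans ?_
    have e : P (x (n+1) - lam (n+1) • A (x (n+1))) - P (x n - lam n • A (x n))
        = (P (x (n+1) - lam (n+1) • A (x (n+1))) - P (x n - lam (n+1) • A (x n)))
        + (P (x n - lam (n+1) • A (x n)) - P (x n - lam n • A (x n))) := by abel
    rw [e]
    have h2 : ‖P (x (n+1) - lam (n+1) • A (x (n+1))) - P (x n - lam (n+1) • A (x n))‖
        ≤ ‖x (n+1) - x n‖ := hTnon (lam (n+1)) (hlam (n+1)) _ (hxQ (n+1)) _ (hxQ n)
    have h3 : ‖P (x n - lam (n+1) • A (x n)) - P (x n - lam n • A (x n))‖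
        ≤ |lam (n+1) - lam n| * ‖A (x n)‖ := by
      refine (hPnon _ _).trans ?_
      have e2 : (x n - lam (n+1) • A (x n)) - (x n - lam n • A (x n))
          = (lam n - lam (n+1)) • A (x n) := by rw [sub_smul]; abel
      rw [e2, norm_smul, Real.norm_eq_abs, abs_sub_comm]
    have h3' : |lam (n+1) - lam n| * ‖A (x n)‖ ≤ |lam (n+1) - lam n| * KA :=
      mul_le_mul_of_nonneg_left (hAbd n) (abs_nonneg _)
    calc ‖_ + _‖ ≤ _ := norm_add_le _ _
      _ ≤ ‖x (n+1) - x n‖ + KA * |lam (n+1) - lam n| := by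
          rw [mul_comm KA]
          linarith
  -- main recurrence
  have hrec : ∀ n, ‖x (n+1+1) - x (n+1)‖ ≤ (1 - (1 - ρ) * α (n+1)) * ‖x (n+1) - x n‖
      + (K1 * |α (n+1) - α n| + KA * |lam (n+1) - lam n|) := by
    intro n
    have hdecomp : x (n+1+1) - x (n+1)
        = α (n+1) • (f (x (n+1)) - f (x n))
        + (α (n+1) - α n) • (f (x n) - S (P (x n - lam n • A (x n))))
        + (1 - α (n+1)) • (S (P (x (n+1) - lam (n+1) • A (x (n+1)))) - S (P (x n - lam n • A (x n)))) := by
      rw [hxrec (n+1), hxrec n]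
      module
    rw [hdecomp]
    have hα1 := hα (n+1)
    have hffd : ‖f (x (n+1)) - f (x n)‖ ≤ ρ * ‖x (n+1) - x n‖ := hf _ (hxQ (n+1)) _ (hxQ n)
    have hyd' := hyd n
    have hfy' := hfy n
    calc ‖α (n+1) • (f (x (n+1)) - f (x n))
          + (α (n+1) - α n) • (f (x n) - S (P (x n - lam n • A (x n))))
          + (1 - α (n+1)) • (S (P (x (n+1) - lam (n+1) • A (x (n+1)))) - S (P (x n - lam n • A (x n))))‖
        ≤ ‖α (n+1) • (f (x (n+1)) - f (x n))‖
          + ‖(α (n+1) - α n) • (f (x n) - S (P (x n - lam n • A (x n))))‖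
          + ‖(1 - α (n+1)) • (S (P (x (n+1) - lam (n+1) • A (x (n+1)))) - S (P (x n - lam n • A (x n))))‖ := by
          refine (norm_add_le _ _).trans ?_
          have := norm_add_le (α (n+1) • (f (x (n+1)) - f (x n)))
            ((α (n+1) - α n) • (f (x n) - S (P (x n - lam n • A (x n)))))
          linarith
      _ = α (n+1) * ‖f (x (n+1)) - f (x n)‖
          + |α (n+1) - α n| * ‖f (x n) - S (P (x n - lam n • A (x n)))‖
          + (1 - α (n+1)) * ‖S (P (x (n+1) - lam (n+1) • A (x (n+1)))) - S (P (x n - lam n • A (x n)))‖ := by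
          rw [norm_smul, norm_smul, norm_smul, Real.norm_eq_abs, Real.norm_eq_abs,
            Real.norm_eq_abs, abs_of_pos hα1.1,
            abs_of_nonneg (by linarith [hα1.2] : (0:ℝ) ≤ 1 - α (n+1))]
      _ ≤ (1 - (1 - ρ) * α (n+1)) * ‖x (n+1) - x n‖
          + (K1 * |α (n+1) - α n| + KA * |lam (n+1) - lam n|) := by
          have b1 : α (n+1) * ‖f (x (n+1)) - f (x n)‖ ≤ α (n+1) * (ρ * ‖x (n+1) - x n‖) :=
            mul_le_mul_of_nonneg_left hffd hα1.1.le
          have b2 : |α (n+1) - α n| * ‖f (x n) - S (P (x n - lam n • A (x n)))‖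
              ≤ |α (n+1) - α n| * K1 := mul_le_mul_of_nonneg_left hfy' (abs_nonneg _)
          have b3 : (1 - α (n+1)) * ‖S (P (x (n+1) - lam (n+1) • A (x (n+1)))) - S (P (x n - lam n • A (x n)))‖
              ≤ (1 - α (n+1)) * (‖x (n+1) - x n‖ + KA * |lam (n+1) - lam n|) :=
            mul_le_mul_of_nonneg_left hyd' (by linarith [hα1.2])
          have b4 : 0 ≤ KA * |lam (n+1) - lam n| := mul_nonneg hKA0 (abs_nonneg _)
          have b5 : 0 ≤ α (n+1) * (KA * |lam (n+1) - lam n|) := mul_nonneg hα1.1.le b4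
          nlinarith [b1, b2, b3, b4, b5, mul_le_mul_of_nonneg_left b4 hα1.1.le]
  -- divergence of the gamma series
  have hγdiv : Tendsto (fun N => ∑ n ∈ range N, (1 - ρ) * α (n+1)) atTop atTop := by
    have h1 : Tendsto (fun N => ∑ n ∈ range (N+1), α n) atTop atTop :=
      hαdiv.comp (tendsto_add_atTop_nat 1)
    have h2 : Tendsto (fun N => ∑ n ∈ range (N+1), α n + (-α 0)) atTop atTop :=
      tendsto_atTop_add_const_right atTop (-α 0) h1
    have h3 : Tendsto (fun N => ∑ n ∈ range N, α (n+1)) atTop atTop := by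
      refine h2.congr (fun N => ?_)
      rw [Finset.sum_range_succ']
      ring
    have h4 := h3.const_mul_atTop (by linarith : (0:ℝ) < 1 - ρ)
    refine h4.congr (fun N => ?_)
    rw [Finset.mul_sum]
  exact xu_lemma (fun n => ‖x (n+1) - x n‖)
    (fun n => (1 - ρ) * α (n+1))
    (fun n => K1 * |α (n+1) - α n| + KA * |lam (n+1) - lam n|)
    (fun n => norm_nonneg _)
    (fun n => mul_pos (by linarith) (hα (n+1)).1)
    (fun n => by show (1 - ρ) * α (n+1) ≤ 1; nlinarith [(hα (n+1)).1, (hα (n+1)).2, mul_nonneg ρ0 (hα (n+1)).1.le])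
    (fun n => add_nonneg (mul_nonneg hK10 (abs_nonneg _)) (mul_nonneg hKA0 (abs_nonneg _)))
    ((hαvar.mul_left K1).add (hlamvar.mul_left KA))
    hγdiv
    hrec
end
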